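/- arXiv:2506.08550 — 6 statements merged into one kernel-verified Lean document; each statement's English description precedes it below -/
import Mathlib

section
/- Let Σ : [0,∞) → ℝ^{d×d} be a differentiable one-parameter family of symmetric positive definite matrices, let c > 0 and β ∈ ℝ. Assume Σ(0) ≤ c·I in the Loewner order, and that for every t ≥ 0 and every unit vector w ∈ ℝ^d that is an eigenvector of Σ(t) corresponding to its largest eigenvalue, one has wᵀ Σ'(t) w ≤ β · (wᵀ Σ(t) w). Then Σ(t) ≤ e^{βt} c · I for every t ≥ 0. -/
open Matrix Set

set_option linter.unusedVariables false

noncomputable def lmax {d : ℕ} (hd : 0 < d) (A : Matrix (Fin d) (Fin d) ℝ) : ℝ :=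
  if h : A.IsHermitian then
    haveI : Nonempty (Fin d) := Fin.pos_iff_nonempty.mp hd
    Finset.univ.sup' Finset.univ_nonempty h.eigenvalues
  else 0

lemma lmax_le_iff {d : ℕ} (hd : 0 < d) {A : Matrix (Fin d) (Fin d) ℝ} (hA : A.IsHermitian) :
    (∀ i, hA.eigenvalues i ≤ lmax hd A) ∧ ∃ i₀, lmax hd A = hA.eigenvalues i₀ := by
  haveI : Nonempty (Fin d) := Fin.pos_iff_nonempty.mp hd
  rw [lmax, dif_pos hA]
  constructor
  · intro i; exact Finset.le_sup' _ (Finset.mem_univ i)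
  · obtain ⟨i, _, h⟩ := Finset.exists_mem_eq_sup' Finset.univ_nonempty hA.eigenvalues
    exact ⟨i, h⟩

lemma psd_of_eig_le {d : ℕ} {A : Matrix (Fin d) (Fin d) ℝ} (hA : A.IsHermitian) {μ : ℝ}
    (h : ∀ i, hA.eigenvalues i ≤ μ) :
    (μ • (1 : Matrix (Fin d) (Fin d) ℝ) - A).PosSemidef := by
  have hU : (hA.eigenvectorUnitary : Matrix (Fin d) (Fin d) ℝ) *
      star (hA.eigenvectorUnitary : Matrix (Fin d) (Fin d) ℝ) = 1 :=
    (Matrix.mem_unitaryGroup_iff).mp hA.eigenvectorUnitary.2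
  have key : μ • (1 : Matrix (Fin d) (Fin d) ℝ) - A
      = (hA.eigenvectorUnitary : Matrix (Fin d) (Fin d) ℝ) *
        diagonal (fun i => μ - hA.eigenvalues i) *
        star (hA.eigenvectorUnitary : Matrix (Fin d) (Fin d) ℝ) := by
    have hD : diagonal (fun i => μ - hA.eigenvalues i)
        = μ • (1 : Matrix (Fin d) (Fin d) ℝ) - diagonal hA.eigenvalues := by
      ext i j
      by_cases hij : i = j <;> simp [Matrix.diagonal_apply, Matrix.one_apply, hij]
    rw [hD, Matrix.mul_sub, Matrix.sub_mul, Matrix.mul_smul, Matrix.smul_mul, mul_one, hU]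
    congr 1
    conv_lhs => rw [hA.spectral_theorem]
    norm_num [Function.comp]
  rw [key, Matrix.star_eq_conjTranspose]
  exact (Matrix.PosSemidef.diagonal (fun i => sub_nonneg.2 (h i))).mul_mul_conjTranspose_same _

lemma quad_le_of_psd {d : ℕ} {A : Matrix (Fin d) (Fin d) ℝ} {μ : ℝ}
    (h : (μ • (1 : Matrix (Fin d) (Fin d) ℝ) - A).PosSemidef) (v : Fin d → ℝ) :
    v ⬝ᵥ A *ᵥ v ≤ μ * (v ⬝ᵥ v) := by
  have := h.dotProduct_mulVec_nonneg v
  simp only [star_trivial, Matrix.sub_mulVec, Matrix.smul_mulVec, Matrix.one_mulVec,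
    dotProduct_sub, dotProduct_smul, smul_eq_mul] at this
  linarith

lemma exists_unit_eigvec {d : ℕ} {A : Matrix (Fin d) (Fin d) ℝ} (hA : A.IsHermitian) (i : Fin d) :
    ∃ w : Fin d → ℝ, w ⬝ᵥ w = 1 ∧ A *ᵥ w = hA.eigenvalues i • w := by
  refine ⟨⇑(hA.eigenvectorBasis i), ?_, hA.mulVec_eigenvectorBasis i⟩
  have h1 : ‖hA.eigenvectorBasis i‖ = 1 := hA.eigenvectorBasis.orthonormal.1 i
  have h2 : (inner (𝕜 := ℝ) (hA.eigenvectorBasis i) (hA.eigenvectorBasis i)) = (1 : ℝ) := by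
    rw [real_inner_self_eq_norm_sq, h1]; norm_num
  rw [PiLp.inner_apply] at h2
  simpa [dotProduct, RCLike.inner_apply, sq] using h2

lemma lmax_quad {d : ℕ} (hd : 0 < d) {A : Matrix (Fin d) (Fin d) ℝ} (hA : A.IsHermitian)
    (v : Fin d → ℝ) : v ⬝ᵥ A *ᵥ v ≤ lmax hd A * (v ⬝ᵥ v) :=
  quad_le_of_psd (psd_of_eig_le hA (lmax_le_iff hd hA).1) v

lemma lmax_eigvec {d : ℕ} (hd : 0 < d) {A : Matrix (Fin d) (Fin d) ℝ} (hA : A.IsHermitian) :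
    ∃ w : Fin d → ℝ, w ⬝ᵥ w = 1 ∧ A *ᵥ w = lmax hd A • w ∧ w ⬝ᵥ A *ᵥ w = lmax hd A := by
  obtain ⟨i₀, h⟩ := (lmax_le_iff hd hA).2
  obtain ⟨w, hw1, hw2⟩ := exists_unit_eigvec hA i₀
  rw [← h] at hw2
  refine ⟨w, hw1, hw2, ?_⟩
  rw [hw2, dotProduct_smul, smul_eq_mul, hw1, mul_one]

lemma quad_abs_le {d : ℕ} {w : Fin d → ℝ} (hw : w ⬝ᵥ w = 1) (M : Matrix (Fin d) (Fin d) ℝ) :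
    |w ⬝ᵥ M *ᵥ w| ≤ ∑ i, ∑ j, |M i j| := by
  have hwi : ∀ i, |w i| ≤ 1 := by
    intro i
    rw [← sq_le_one_iff_abs_le_one]
    calc w i ^ 2 ≤ ∑ j, w j ^ 2 := Finset.single_le_sum (fun j _ => sq_nonneg (w j)) (Finset.mem_univ i)
      _ = 1 := by rw [← hw]; simp [dotProduct, sq]
  calc |w ⬝ᵥ M *ᵥ w| = |∑ i, ∑ j, w i * (M i j * w j)| := by
        simp [dotProduct, Matrix.mulVec, Finset.mul_sum]
    _ ≤ ∑ i, |∑ j, w i * (M i j * w j)| := Finset.abs_sum_le_sum_abs _ _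
    _ ≤ ∑ i, ∑ j, |w i * (M i j * w j)| :=
        Finset.sum_le_sum fun i _ => Finset.abs_sum_le_sum_abs _ _
    _ ≤ ∑ i, ∑ j, |M i j| := by
        refine Finset.sum_le_sum fun i _ => Finset.sum_le_sum fun j _ => ?_
        rw [abs_mul, abs_mul]
        calc |w i| * (|M i j| * |w j|) ≤ 1 * (|M i j| * 1) := by
              exact mul_le_mul (hwi i) (mul_le_mul_of_nonneg_left (hwi j) (abs_nonneg _))
                (by positivity) one_pos.le
          _ = |M i j| := by ring

lemma lmax_diff {d : ℕ} (hd : 0 < d) {A B : Matrix (Fin d) (Fin d) ℝ}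
    (hA : A.IsHermitian) (hB : B.IsHermitian) :
    lmax hd A ≤ lmax hd B + ∑ i, ∑ j, |A i j - B i j| := by
  obtain ⟨w, hw1, _, hw3⟩ := lmax_eigvec hd hA
  have e1 : w ⬝ᵥ A *ᵥ w = w ⬝ᵥ B *ᵥ w + w ⬝ᵥ (A - B) *ᵥ w := by
    rw [Matrix.sub_mulVec, dotProduct_sub]; ring
  have e2 : w ⬝ᵥ B *ᵥ w ≤ lmax hd B := by
    have := lmax_quad hd hB w; rwa [hw1, mul_one] at this
  have e3 : w ⬝ᵥ (A - B) *ᵥ w ≤ ∑ i, ∑ j, |A i j - B i j| := by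
    have := (abs_le.1 (quad_abs_le hw1 (A - B))).2
    simpa [Matrix.sub_apply] using this
  linarith [hw3 ▸ e1]

lemma sphere_compact {d : ℕ} : IsCompact {v : Fin d → ℝ | v ⬝ᵥ v = 1} := by
  apply Metric.isCompact_of_isClosed_isBounded
  · exact isClosed_eq (by continuity) continuous_const
  · apply (Metric.isBounded_closedBall (x := (0 : Fin d → ℝ)) (r := 1)).subset
    intro v hv
    rw [Metric.mem_closedBall, dist_zero_right]
    refine (pi_norm_le_iff_of_nonneg one_pos.le).2 fun i => ?_
    rw [Real.norm_eq_abs, ← sq_le_one_iff_abs_le_one]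
    calc v i ^ 2 ≤ ∑ j, v j ^ 2 := Finset.single_le_sum (fun j _ => sq_nonneg (v j)) (Finset.mem_univ i)
      _ = 1 := by rw [← hv]; simp [dotProduct, sq]

lemma quad_continuous {d : ℕ} :
    Continuous (fun p : Matrix (Fin d) (Fin d) ℝ × (Fin d → ℝ) => p.2 ⬝ᵥ p.1 *ᵥ p.2) := by
  simp only [dotProduct, Matrix.mulVec]
  fun_prop

open Filter in
lemma tendsto_quad {d : ℕ} {M : ℕ → Matrix (Fin d) (Fin d) ℝ} {A : Matrix (Fin d) (Fin d) ℝ}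
    {u : ℕ → Fin d → ℝ} {w : Fin d → ℝ}
    (hM : ∀ i j, Tendsto (fun n => M n i j) atTop (nhds (A i j)))
    (hu : ∀ i, Tendsto (fun n => u n i) atTop (nhds (w i))) :
    Tendsto (fun n => u n ⬝ᵥ (M n) *ᵥ (u n)) atTop (nhds (w ⬝ᵥ A *ᵥ w)) := by
  simp only [dotProduct, Matrix.mulVec]
  exact tendsto_finset_sum _ fun i _ =>
    (hu i).mul (tendsto_finset_sum _ fun j _ => (hM i j).mul (hu j))

open Filter in
lemma tendsto_mulvec_entry {d : ℕ} {M : ℕ → Matrix (Fin d) (Fin d) ℝ}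
    {A : Matrix (Fin d) (Fin d) ℝ} {u : ℕ → Fin d → ℝ} {w : Fin d → ℝ}
    (hM : ∀ i j, Tendsto (fun n => M n i j) atTop (nhds (A i j)))
    (hu : ∀ j, Tendsto (fun n => u n j) atTop (nhds (w j))) (i : Fin d) :
    Tendsto (fun n => (M n *ᵥ u n) i) atTop (nhds ((A *ᵥ w) i)) := by
  simp only [Matrix.mulVec, dotProduct]
  exact tendsto_finset_sum _ fun j _ => (hM i j).mul (hu j)


open Filter in
/-- Matrix maximum principle, upper-bound case: if `Σ(0) ≤ c·I` and at every time `t ≥ 0`,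
for every unit eigenvector `w` of `Σ(t)` corresponding to its largest eigenvalue one has
`wᵀ Σ'(t) w ≤ β · wᵀ Σ(t) w`, then `Σ(t) ≤ e^{βt} c · I` for all `t ≥ 0`. -/
theorem matrix_maximum_principle_upper {d : ℕ}
    (S S' : ℝ → Matrix (Fin d) (Fin d) ℝ) (c β : ℝ) (hc : 0 < c)
    (hderiv : ∀ t ∈ Ici (0 : ℝ), ∀ i j, HasDerivAt (fun s => S s i j) (S' t i j) t)
    (hposdef : ∀ t ∈ Ici (0 : ℝ), (S t).PosDef)
    (h0 : ((c • (1 : Matrix (Fin d) (Fin d) ℝ)) - S 0).PosSemidef)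
    (heig : ∀ t ∈ Ici (0 : ℝ), ∀ w : Fin d → ℝ, w ⬝ᵥ w = 1 →
      ∀ μ : ℝ, (S t).mulVec w = μ • w →
      (∀ v : Fin d → ℝ, v ⬝ᵥ (S t).mulVec v ≤ μ * (v ⬝ᵥ v)) →
      w ⬝ᵥ (S' t).mulVec w ≤ β * (w ⬝ᵥ (S t).mulVec w)) :
    ∀ t ∈ Ici (0 : ℝ),
      ((Real.exp (β * t) * c) • (1 : Matrix (Fin d) (Fin d) ℝ) - S t).PosSemidef := by
  classical
  intro t ht
  have ht0 : (0:ℝ) ≤ t := ht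
  rcases Nat.eq_zero_or_pos d with hd0 | hd
  · subst hd0
    constructor
    · show _ᴴ = _
      ext i j
      exact i.elim0
    · intro x
      rw [Subsingleton.elim x 0]
      simp [dotProduct]
  haveI : Nonempty (Fin d) := Fin.pos_iff_nonempty.mp hd
  have hHerm : ∀ s ∈ Ici (0:ℝ), (S s).IsHermitian := fun s hs => (hposdef s hs).1
  set f : ℝ → ℝ := fun s => lmax hd (S (max s 0)) with hfdef
  have hfeq : ∀ s ∈ Ici (0:ℝ), f s = lmax hd (S s) := by
    intro s hs
    simp only [hfdef, max_eq_left (mem_Ici.1 hs)]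
  have hquad : ∀ s ∈ Ici (0:ℝ), ∀ v, v ⬝ᵥ (S s) *ᵥ v ≤ f s * (v ⬝ᵥ v) := by
    intro s hs v
    rw [hfeq s hs]
    exact lmax_quad hd (hHerm s hs) v
  have heigv : ∀ s ∈ Ici (0:ℝ), ∃ w, w ⬝ᵥ w = 1 ∧ (S s) *ᵥ w = f s • w ∧
      w ⬝ᵥ (S s) *ᵥ w = f s := by
    intro s hs
    rw [hfeq s hs]
    exact lmax_eigvec hd (hHerm s hs)
  suffices hft : f t ≤ Real.exp (β * t) * c by
    rw [hfeq t ht] at hft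
    exact psd_of_eig_le (hHerm t ht)
      (fun i => le_trans ((lmax_le_iff hd (hHerm t ht)).1 i) hft)
  -- continuity of f on [0, t]
  have hcont : ContinuousOn f (Icc (0:ℝ) t) := by
    intro s hs
    have hs0 : s ∈ Ici (0:ℝ) := hs.1
    set g : ℝ → ℝ := fun u => ∑ i, ∑ j, |S u i j - S s i j| with hgdef
    have hgt0 : Tendsto g (nhds s) (nhds 0) := by
      have h1 : Tendsto g (nhds s) (nhds (∑ i : Fin d, ∑ j : Fin d, |S s i j - S s i j|)) := by
        apply tendsto_finset_sum _ fun i _ => ?_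
        apply tendsto_finset_sum _ fun j _ => ?_
        exact (((hderiv s hs0 i j).continuousAt).sub tendsto_const_nhds).abs
      simpa using h1
    have hbound : ∀ u ∈ Ici (0:ℝ), f s - g u ≤ f u ∧ f u ≤ f s + g u := by
      intro u hu
      have habs : ∑ i, ∑ j, |S s i j - S u i j| = g u :=
        Finset.sum_congr rfl fun i _ => Finset.sum_congr rfl fun j _ => abs_sub_comm _ _
      constructor
      · have h2 := lmax_diff hd (hHerm s hs0) (hHerm u hu)
        rw [← hfeq s hs0, ← hfeq u hu, habs] at h2
        linarith
      · have h2 := lmax_diff hd (hHerm u hu) (hHerm s hs0)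
        rw [← hfeq s hs0, ← hfeq u hu] at h2
        exact h2
    have h1 : Tendsto (fun u => f s - g u) (nhdsWithin s (Icc (0:ℝ) t)) (nhds (f s)) := by
      have h0' : Tendsto (fun u => f s - g u) (nhds s) (nhds (f s - 0)) :=
        Tendsto.sub tendsto_const_nhds hgt0
      simpa using h0'.mono_left nhdsWithin_le_nhds
    have h2 : Tendsto (fun u => f s + g u) (nhdsWithin s (Icc (0:ℝ) t)) (nhds (f s)) := by
      have h0' : Tendsto (fun u => f s + g u) (nhds s) (nhds (f s + 0)) :=
        Tendsto.add tendsto_const_nhds hgt0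
      simpa using h0'.mono_left nhdsWithin_le_nhds
    refine tendsto_of_tendsto_of_tendsto_of_le_of_le' h1 h2 ?_ ?_
    · filter_upwards [self_mem_nhdsWithin] with u hu
      exact (hbound u hu.1).1
    · filter_upwards [self_mem_nhdsWithin] with u hu
      exact (hbound u hu.1).2
  -- liminf slope condition
  have hf' : ∀ x ∈ Ico (0:ℝ) t, ∀ r, β * f x < r →
      ∃ᶠ ζ in nhdsWithin x (Ioi x), slope f x ζ < r := by
    intro x hx r hr
    have hx0 : (0:ℝ) ≤ x := hx.1
    have hxI : x ∈ Ici (0:ℝ) := hx0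
    set z : ℕ → ℝ := fun n => x + 1 / (n + 1) with hz
    have hzx : ∀ n : ℕ, x < z n := fun n => by
      have h : (0:ℝ) < 1 / ((n:ℝ) + 1) := by positivity
      simp only [hz]
      linarith
    have hz0 : ∀ n : ℕ, z n ∈ Ici (0:ℝ) := fun n => le_trans hx0 (hzx n).le
    have hztend : Tendsto z atTop (nhdsWithin x (Ioi x)) := by
      rw [tendsto_nhdsWithin_iff]
      constructor
      · have hlim : Tendsto (fun n : ℕ => x + 1 / ((n:ℝ) + 1)) atTop (nhds x) := by
          have h := tendsto_one_div_add_atTop_nhds_zero_nat (𝕜 := ℝ)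
          simpa using (tendsto_const_nhds (x := x) (f := atTop (α := ℕ))).add h
        exact hlim
      · exact Eventually.of_forall fun n => hzx n
    choose w hw1 hw2 hw3 using fun n => heigv (z n) (hz0 n)
    obtain ⟨w₀, hw₀mem, φ, hφ, hwtend⟩ := sphere_compact.tendsto_subseq hw1
    have hw₀1 : w₀ ⬝ᵥ w₀ = 1 := hw₀mem
    have hφtend : Tendsto (z ∘ φ) atTop (nhdsWithin x (Ioi x)) := hztend.comp hφ.tendsto_atTop
    have hφtend' : Tendsto (z ∘ φ) atTop (nhds x) := hφtend.mono_right nhdsWithin_le_nhds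
    have hucoord : ∀ i, Tendsto (fun n => w (φ n) i) atTop (nhds (w₀ i)) := fun i =>
      tendsto_pi_nhds.1 hwtend i
    have hSe : ∀ i j, Tendsto (fun n => S (z (φ n)) i j) atTop (nhds (S x i j)) := fun i j =>
      ((hderiv x hxI i j).continuousAt).tendsto.comp hφtend'
    set ν : ℝ := w₀ ⬝ᵥ S x *ᵥ w₀ with hν
    have hqn : Tendsto (fun n => f (z (φ n))) atTop (nhds ν) := by
      have := tendsto_quad hSe hucoord
      exact this.congr fun n => hw3 (φ n)
    have hquadν : ∀ v : Fin d → ℝ, v ⬝ᵥ S x *ᵥ v ≤ ν * (v ⬝ᵥ v) := by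
      intro v
      have h1 : Tendsto (fun n => v ⬝ᵥ S (z (φ n)) *ᵥ v) atTop (nhds (v ⬝ᵥ S x *ᵥ v)) :=
        tendsto_quad hSe fun i => tendsto_const_nhds
      have h2 : Tendsto (fun n => f (z (φ n)) * (v ⬝ᵥ v)) atTop (nhds (ν * (v ⬝ᵥ v))) :=
        hqn.mul_const _
      exact le_of_tendsto_of_tendsto' h1 h2 fun n => hquad _ (hz0 _) v
    have hEig : S x *ᵥ w₀ = ν • w₀ := by
      funext i
      have h1 : Tendsto (fun n => (S (z (φ n)) *ᵥ w (φ n)) i) atTop (nhds ((S x *ᵥ w₀) i)) :=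
        tendsto_mulvec_entry hSe hucoord i
      have h2 : Tendsto (fun n => f (z (φ n)) * w (φ n) i) atTop (nhds (ν * w₀ i)) :=
        hqn.mul (hucoord i)
      have h3 : (fun n => (S (z (φ n)) *ᵥ w (φ n)) i) = fun n => f (z (φ n)) * w (φ n) i := by
        funext n
        rw [hw2 (φ n)]
        simp
      rw [h3] at h1
      have := tendsto_nhds_unique h1 h2
      simpa using this
    have hheig : w₀ ⬝ᵥ S' x *ᵥ w₀ ≤ β * ν := by
      have := heig x hxI w₀ hw₀1 ν hEig hquadν
      rwa [← hν] at this
    have hνfx : ν = f x := by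
      apply le_antisymm
      · have := hquad x hxI w₀
        rwa [hw₀1, mul_one, ← hν] at this
      · obtain ⟨wx, hwx1, _, hwx3⟩ := heigv x hxI
        have := hquadν wx
        rwa [hwx3, hwx1, mul_one] at this
    have hlt : w₀ ⬝ᵥ S' x *ᵥ w₀ < r := lt_of_le_of_lt hheig (by rw [hνfx]; exact hr)
    -- slope comparison matrices
    set Q : ℕ → Matrix (Fin d) (Fin d) ℝ :=
      fun n => (z (φ n) - x)⁻¹ • (S (z (φ n)) - S x) with hQ
    have hQe : ∀ i j, Tendsto (fun n => Q n i j) atTop (nhds (S' x i j)) := by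
      intro i j
      have hne : Tendsto (z ∘ φ) atTop (nhdsWithin x {x}ᶜ) :=
        hφtend.mono_right (nhdsWithin_mono x fun y hy => ne_of_gt hy)
      have hs := (hasDerivAt_iff_tendsto_slope.1 (hderiv x hxI i j)).comp hne
      apply hs.congr
      intro n
      simp only [Function.comp_apply, slope_def_field, hQ, Matrix.smul_apply, Matrix.sub_apply,
        smul_eq_mul]
      rw [div_eq_inv_mul]
    have hslopelim : Tendsto (fun n => w (φ n) ⬝ᵥ Q n *ᵥ w (φ n)) atTop
        (nhds (w₀ ⬝ᵥ S' x *ᵥ w₀)) := tendsto_quad hQe hucoord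
    have hevQ : ∀ᶠ n in atTop, w (φ n) ⬝ᵥ Q n *ᵥ w (φ n) < r :=
      hslopelim.eventually (gt_mem_nhds hlt)
    have hslope_le : ∀ n, slope f x (z (φ n)) ≤ w (φ n) ⬝ᵥ Q n *ᵥ w (φ n) := by
      intro n
      have e2 : w (φ n) ⬝ᵥ S x *ᵥ w (φ n) ≤ f x := by
        have := hquad x hxI (w (φ n))
        rwa [hw1 (φ n), mul_one] at this
      have hd1 : f (z (φ n)) - f x ≤
          w (φ n) ⬝ᵥ S (z (φ n)) *ᵥ w (φ n) - w (φ n) ⬝ᵥ S x *ᵥ w (φ n) := by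
        have e1 := hw3 (φ n)
        linarith
      have hpos : 0 < z (φ n) - x := sub_pos.2 (hzx (φ n))
      have hQval : w (φ n) ⬝ᵥ Q n *ᵥ w (φ n) = (z (φ n) - x)⁻¹ *
          (w (φ n) ⬝ᵥ S (z (φ n)) *ᵥ w (φ n) - w (φ n) ⬝ᵥ S x *ᵥ w (φ n)) := by
        rw [hQ]
        simp only [Matrix.smul_mulVec, dotProduct_smul, smul_eq_mul,
          Matrix.sub_mulVec, dotProduct_sub]
      rw [slope_def_field, hQval, div_eq_inv_mul]
      exact mul_le_mul_of_nonneg_left hd1 (inv_nonneg.2 hpos.le)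
    have hev : ∀ᶠ n in atTop, slope f x ((z ∘ φ) n) < r :=
      hevQ.mono fun n hn => lt_of_le_of_lt (hslope_le n) hn
    exact hφtend.frequently hev.frequently
  -- fencing for each ε > 0
  have hKey : ∀ ε > (0:ℝ), f t ≤ c * Real.exp (β * t) + ε * Real.exp ((|β| + 1) * t) := by
    intro ε hε
    set K : ℝ := |β| + 1 with hK
    have hexp : ∀ (a x : ℝ), HasDerivAt (fun s => Real.exp (a * s)) (a * Real.exp (a * x)) x := by
      intro a x
      have h1 : HasDerivAt (fun s : ℝ => a * s) (a * 1) x := (hasDerivAt_id x).const_mul a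
      have := h1.exp
      simpa [mul_comm] using this
    have hB : ∀ x, HasDerivAt (fun s => c * Real.exp (β * s) + ε * Real.exp (K * s))
        (c * (β * Real.exp (β * x)) + ε * (K * Real.exp (K * x))) x := fun x =>
      ((hexp β x).const_mul c).add ((hexp K x).const_mul ε)
    have ha : f 0 ≤ c * Real.exp (β * 0) + ε * Real.exp (K * 0) := by
      obtain ⟨w, hw1, _, hw3⟩ := heigv 0 Set.self_mem_Ici
      have h1 : w ⬝ᵥ S 0 *ᵥ w ≤ c * (w ⬝ᵥ w) := quad_le_of_psd h0 w
      rw [hw1, mul_one] at h1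
      rw [hw3] at h1
      simp only [mul_zero, Real.exp_zero, mul_one]
      linarith
    have hbd : ∀ x ∈ Ico (0:ℝ) t, f x = c * Real.exp (β * x) + ε * Real.exp (K * x) →
        β * f x < c * (β * Real.exp (β * x)) + ε * (K * Real.exp (K * x)) := by
      intro x _ hfx
      rw [hfx]
      have h1 : β * (ε * Real.exp (K * x)) < K * (ε * Real.exp (K * x)) := by
        apply mul_lt_mul_of_pos_right _ (by positivity)
        rw [hK]
        exact lt_of_le_of_lt (le_abs_self β) (lt_add_one _)
      nlinarith [Real.exp_pos (β * x), Real.exp_pos (K * x)]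
    have := image_le_of_liminf_slope_right_lt_deriv_boundary hcont hf' ha hB hbd ⟨ht0, le_rfl⟩
    exact this
  have hmono : ∀ ε' > (0:ℝ), f t ≤ c * Real.exp (β * t) + ε' := by
    intro ε' hε'
    have h := hKey (ε' / Real.exp ((|β| + 1) * t)) (by positivity)
    rwa [div_mul_cancel₀ _ (Real.exp_pos _).ne'] at h
  have := le_of_forall_pos_le_add hmono
  linarith [this, mul_comm c (Real.exp (β * t))]
end

section
/- Let Σ : [0,∞) → ℝ^{d×d} be a differentiable one-parameter family of symmetric positive definite matrices, let c > 0 and β ∈ ℝ. Assume Σ(0) ≥ c·I in the Loewner order, and that for every t ≥ 0 and every unit vector w ∈ ℝ^d that is an eigenvector of Σ(t) corresponding to its smallest eigenvalue, one has wᵀ Σ'(t) w ≥ β · (wᵀ Σ(t) w). Then Σ(t) ≥ e^{βt} c · I for every t ≥ 0. -/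
open Matrix Set Filter Topology

namespace MatrixMaxPrincipleAux

variable {d : ℕ}

/-- the quadratic form -/
private noncomputable def quadF (M : Matrix (Fin d) (Fin d) ℝ) (w : Fin d → ℝ) : ℝ :=
  w ⬝ᵥ M.mulVec w

/-- smallest eigenvalue as inf of Rayleigh quotient on the unit sphere -/
private noncomputable def lammin (M : Matrix (Fin d) (Fin d) ℝ) : ℝ :=
  sInf (quadF M '' {w | w ⬝ᵥ w = 1})

private lemma unit_exists (hd : 0 < d) : ∃ w : Fin d → ℝ, w ⬝ᵥ w = 1 := by
  refine ⟨Pi.single ⟨0, hd⟩ 1, ?_⟩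
  rw [single_dotProduct]
  simp

private lemma abs_coord_le {w : Fin d → ℝ} (hw : w ⬝ᵥ w = 1) (i : Fin d) : |w i| ≤ 1 := by
  have h1 : w i * w i ≤ 1 := by
    rw [← hw, dotProduct]
    exact Finset.single_le_sum (fun j _ => mul_self_nonneg (w j)) (Finset.mem_univ i)
  nlinarith [abs_nonneg (w i), sq_abs (w i)]

private lemma quad_abs_le (M : Matrix (Fin d) (Fin d) ℝ) {w : Fin d → ℝ} (hw : w ⬝ᵥ w = 1) :
    |quadF M w| ≤ ∑ i, ∑ j, |M i j| := by
  rw [quadF, dotProduct]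
  calc |∑ i, w i * (M.mulVec w) i| ≤ ∑ i, |w i * (M.mulVec w) i| :=
        Finset.abs_sum_le_sum_abs _ _
    _ ≤ ∑ i, ∑ j, |M i j| := by
        refine Finset.sum_le_sum fun i _ => ?_
        rw [abs_mul, mulVec, dotProduct]
        calc |w i| * |∑ j, M i j * w j| ≤ 1 * |∑ j, M i j * w j| := by
              have := abs_coord_le hw i
              have h2 : (0:ℝ) ≤ |∑ j, M i j * w j| := abs_nonneg _
              nlinarith
          _ = |∑ j, M i j * w j| := one_mul _
          _ ≤ ∑ j, |M i j * w j| := Finset.abs_sum_le_sum_abs _ _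
          _ ≤ ∑ j, |M i j| := by
              refine Finset.sum_le_sum fun j _ => ?_
              rw [abs_mul]
              have := abs_coord_le hw j
              have h2 : (0:ℝ) ≤ |M i j| := abs_nonneg _
              nlinarith

private lemma bddBelow_quad (M : Matrix (Fin d) (Fin d) ℝ) :
    BddBelow (quadF M '' {w | w ⬝ᵥ w = 1}) := by
  refine ⟨-(∑ i, ∑ j, |M i j|), ?_⟩
  rintro _ ⟨u, hu, rfl⟩
  have := quad_abs_le M hu
  have := neg_abs_le (quadF M u)
  linarith

private lemma lammin_le (M : Matrix (Fin d) (Fin d) ℝ) {w : Fin d → ℝ} (hw : w ⬝ᵥ w = 1) :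
    lammin M ≤ quadF M w :=
  csInf_le (bddBelow_quad M) ⟨w, hw, rfl⟩

private lemma le_lammin (hd : 0 < d) (M : Matrix (Fin d) (Fin d) ℝ) {c : ℝ}
    (h : ∀ w : Fin d → ℝ, w ⬝ᵥ w = 1 → c ≤ quadF M w) : c ≤ lammin M := by
  obtain ⟨w₀, hw₀⟩ := unit_exists hd
  exact le_csInf ⟨_, ⟨w₀, hw₀, rfl⟩⟩ (by rintro _ ⟨u, hu, rfl⟩; exact h u hu)

/-- eigenvector attaining the minimum -/
private lemma eigmin (hd : 0 < d) (M : Matrix (Fin d) (Fin d) ℝ) (hM : M.IsHermitian) :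
    ∃ w : Fin d → ℝ, w ⬝ᵥ w = 1 ∧ quadF M w = lammin M ∧
      M.mulVec w = lammin M • w ∧
      ∀ v : Fin d → ℝ, lammin M * (v ⬝ᵥ v) ≤ v ⬝ᵥ M.mulVec v := by
  haveI : Nonempty (Fin d) := Fin.pos_iff_nonempty.mp hd
  have key : ∃ w : Fin d → ℝ, w ⬝ᵥ w = 1 ∧ M.mulVec w = (w ⬝ᵥ M.mulVec w) • w ∧
      ∀ v : Fin d → ℝ, (w ⬝ᵥ M.mulVec w) * (v ⬝ᵥ v) ≤ v ⬝ᵥ M.mulVec v := by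
    have hT : IsSelfAdjoint (Matrix.toEuclideanCLM (𝕜 := ℝ) M) := by
      have h1 : IsSelfAdjoint M := hM
      exact h1.map (Matrix.toEuclideanCLM (𝕜 := ℝ))
    set T : EuclideanSpace ℝ (Fin d) →L[ℝ] EuclideanSpace ℝ (Fin d) :=
      Matrix.toEuclideanCLM (𝕜 := ℝ) M with hTdef
    have hsph : (Metric.sphere (0:EuclideanSpace ℝ (Fin d)) 1).Nonempty :=
      NormedSpace.sphere_nonempty.2 zero_le_one
    obtain ⟨x₀, hx₀mem, hmin⟩ := (isCompact_sphere (0:EuclideanSpace ℝ (Fin d)) 1).exists_isMinOn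
      hsph T.reApplyInnerSelf_continuous.continuousOn
    have hx₀ : ‖x₀‖ = 1 := mem_sphere_zero_iff_norm.mp hx₀mem
    have hx₀ne : x₀ ≠ 0 := by intro h; rw [h] at hx₀; simp at hx₀
    have hloc : IsLocalExtrOn T.reApplyInnerSelf
        (Metric.sphere (0:EuclideanSpace ℝ (Fin d)) ‖x₀‖) x₀ := by
      rw [hx₀]; exact Or.inl hmin.localize
    have heq := hT.eq_smul_self_of_isLocalExtrOn_real hloc
    have hcoord : ∀ x : EuclideanSpace ℝ (Fin d), ∀ i,
        T x i = M.mulVec (WithLp.equiv 2 _ x) i := fun x i => rfl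
    have hre : ∀ x : EuclideanSpace ℝ (Fin d), T.reApplyInnerSelf x =
        (WithLp.equiv 2 _ x) ⬝ᵥ M.mulVec (WithLp.equiv 2 _ x) := by
      intro x
      rw [ContinuousLinearMap.reApplyInnerSelf_apply, PiLp.inner_apply]
      simp only [RCLike.inner_apply, starRingEnd_apply, star_trivial, RCLike.re_to_real]
      rw [dotProduct]
      apply Finset.sum_congr rfl
      intro i _
      rw [hcoord x i]; rfl
    have hnorm : ∀ x : EuclideanSpace ℝ (Fin d),
        (WithLp.equiv 2 _ x) ⬝ᵥ (WithLp.equiv 2 _ x) = ‖x‖ ^ 2 := by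
      intro x
      rw [← real_inner_self_eq_norm_sq, PiLp.inner_apply]
      simp only [RCLike.inner_apply, starRingEnd_apply, star_trivial, RCLike.re_to_real]
      rfl
    set w : Fin d → ℝ := WithLp.equiv 2 _ x₀ with hwdef
    have hw1 : w ⬝ᵥ w = 1 := by rw [hnorm, hx₀]; norm_num
    have hray : T.rayleighQuotient x₀ = w ⬝ᵥ M.mulVec w := by
      rw [ContinuousLinearMap.rayleighQuotient, hx₀, hre]
      norm_num
      rfl
    refine ⟨w, hw1, ?_, ?_⟩
    · funext i
      have h5 := congr_arg (fun z : EuclideanSpace ℝ (Fin d) => z i) heq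
      simp only [PiLp.smul_apply, smul_eq_mul] at h5
      rw [hray] at h5
      rw [← hcoord x₀ i] ; rw [h5]; rfl
    · intro v
      rcases eq_or_ne v 0 with rfl | hv
      · simp
      · set ve : EuclideanSpace ℝ (Fin d) := (WithLp.equiv 2 _).symm v with hvedef
        have hvene : ve ≠ 0 := by
          intro h
          apply hv
          have h6 := congrArg (WithLp.equiv 2 (Fin d → ℝ)) h
          simpa [hvedef] using h6
        have hvnorm : 0 < ‖ve‖ := norm_pos_iff.mpr hvene
        have humem : (‖ve‖⁻¹ • ve) ∈ Metric.sphere (0:EuclideanSpace ℝ (Fin d)) 1 := by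
          rw [mem_sphere_zero_iff_norm, norm_smul]
          simp [abs_of_pos hvnorm, inv_mul_cancel₀ hvnorm.ne']
        have hle : T.reApplyInnerSelf x₀ ≤ T.reApplyInnerSelf (‖ve‖⁻¹ • ve) := hmin humem
        rw [ContinuousLinearMap.reApplyInnerSelf_smul] at hle
        have h1 : T.reApplyInnerSelf x₀ = w ⬝ᵥ M.mulVec w := by rw [hre]
        have h2 : T.reApplyInnerSelf ve = v ⬝ᵥ M.mulVec v := by
          rw [hre]; rfl
        have h3 : v ⬝ᵥ v = ‖ve‖ ^ 2 := by rw [← hnorm]; rfl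
        rw [h1, h2] at hle
        have hn : ‖(‖ve‖⁻¹ : ℝ)‖ ^ 2 = (‖ve‖ ^ 2)⁻¹ := by
          rw [Real.norm_eq_abs, abs_of_pos (by positivity)]
          field_simp
        rw [hn] at hle
        rw [h3]
        have h4 : (0:ℝ) < ‖ve‖ ^ 2 := by positivity
        calc w ⬝ᵥ M.mulVec w * ‖ve‖ ^ 2 ≤ (‖ve‖ ^ 2)⁻¹ * (v ⬝ᵥ M.mulVec v) * ‖ve‖ ^ 2 := by
              nlinarith [hle]
          _ = v ⬝ᵥ M.mulVec v := by field_simp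
  obtain ⟨w, hw1, heig, hlow⟩ := key
  have hval : quadF M w = lammin M := by
    refine le_antisymm ?_ (lammin_le M hw1)
    refine le_lammin hd M fun u hu => ?_
    have := hlow u
    rw [hu] at this
    simpa [quadF] using this
  refine ⟨w, hw1, hval, ?_, ?_⟩
  · rw [← hval]; exact heig
  · intro v; rw [← hval]; exact hlow v

/-- one-sided Lipschitz-type comparison -/
private lemma lammin_sub_le (hd : 0 < d) (A B : Matrix (Fin d) (Fin d) ℝ)
    (hB : B.IsHermitian) :
    lammin A ≤ lammin B + ∑ i, ∑ j, |A i j - B i j| := by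
  obtain ⟨w, hw1, hval, _, _⟩ := eigmin hd B hB
  have h1 : lammin A ≤ quadF A w := lammin_le A hw1
  have h2 : quadF A w - quadF B w = quadF (A - B) w := by
    simp [quadF, sub_mulVec, dotProduct_sub]
  have h3 := quad_abs_le (A - B) hw1
  have h4 : quadF (A - B) w ≤ ∑ i, ∑ j, |A i j - B i j| := by
    refine le_trans (le_abs_self _) (le_trans h3 ?_)
    apply le_of_eq
    refine Finset.sum_congr rfl fun i _ => Finset.sum_congr rfl fun j _ => ?_
    simp [Matrix.sub_apply]
  rw [← hval]
  linarith



variable {d : ℕ}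

private lemma hasDerivAt_quad (S S' : ℝ → Matrix (Fin d) (Fin d) ℝ) (w : Fin d → ℝ) (t : ℝ)
    (h : ∀ i j, HasDerivAt (fun s => S s i j) (S' t i j) t) :
    HasDerivAt (fun s => w ⬝ᵥ (S s).mulVec w) (w ⬝ᵥ (S' t).mulVec w) t := by
  have hrw : ∀ (A : Matrix (Fin d) (Fin d) ℝ),
      w ⬝ᵥ A.mulVec w = ∑ i, ∑ j, w i * (A i j * w j) := by
    intro A
    rw [dotProduct]
    refine Finset.sum_congr rfl fun i _ => ?_
    rw [mulVec, dotProduct, Finset.mul_sum]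
  have h2 : (fun s => w ⬝ᵥ (S s).mulVec w) = fun s => ∑ i, ∑ j, w i * (S s i j * w j) :=
    funext fun s => hrw (S s)
  rw [h2, hrw]
  exact HasDerivAt.fun_sum fun i _ => HasDerivAt.fun_sum fun j _ =>
    ((h i j).mul_const (w j)).const_mul (w i)


end MatrixMaxPrincipleAux


open MatrixMaxPrincipleAux Filter Topology

/-- Matrix maximum principle, lower-bound case: if `Σ(0) ≥ c·I` and at every time `t ≥ 0`,
for every unit eigenvector `w` of `Σ(t)` corresponding to its smallest eigenvalue one has
`wᵀ Σ'(t) w ≥ β · wᵀ Σ(t) w`, then `Σ(t) ≥ e^{βt} c · I` for all `t ≥ 0`. -/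
theorem matrix_maximum_principle_lower {d : ℕ}
    (S S' : ℝ → Matrix (Fin d) (Fin d) ℝ) (c β : ℝ) (hc : 0 < c)
    (hderiv : ∀ t ∈ Ici (0 : ℝ), ∀ i j, HasDerivAt (fun s => S s i j) (S' t i j) t)
    (hposdef : ∀ t ∈ Ici (0 : ℝ), (S t).PosDef)
    (h0 : (S 0 - c • (1 : Matrix (Fin d) (Fin d) ℝ)).PosSemidef)
    (heig : ∀ t ∈ Ici (0 : ℝ), ∀ w : Fin d → ℝ, w ⬝ᵥ w = 1 →
      ∀ μ : ℝ, (S t).mulVec w = μ • w →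
      (∀ v : Fin d → ℝ, μ * (v ⬝ᵥ v) ≤ v ⬝ᵥ (S t).mulVec v) →
      β * (w ⬝ᵥ (S t).mulVec w) ≤ w ⬝ᵥ (S' t).mulVec w) :
    ∀ t ∈ Ici (0 : ℝ),
      (S t - (Real.exp (β * t) * c) • (1 : Matrix (Fin d) (Fin d) ℝ)).PosSemidef := by
  intro t ht
  rcases Nat.eq_zero_or_pos d with hd0 | hd
  · subst hd0
    constructor
    · show _ = _
      funext i j
      exact absurd i.isLt (by omega)
    · intro x
      rw [Subsingleton.elim x 0]; simp
  -- d > 0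
  -- continuity of entries on Ici 0
  have hcontS : ∀ i j, ContinuousOn (fun s => S s i j) (Ici (0:ℝ)) :=
    fun i j s hs => ((hderiv s hs i j).continuousAt).continuousWithinAt
  -- continuity of lammin ∘ S on Ici 0
  have hlamcont : ContinuousOn (fun s => lammin (S s)) (Ici (0:ℝ)) := by
    intro u hu
    have hbound : ∀ s ∈ Ici (0:ℝ),
        |lammin (S s) - lammin (S u)| ≤ ∑ i, ∑ j, |S s i j - S u i j| := by
      intro s hs
      have h1 := lammin_sub_le hd (S s) (S u) (hposdef u hu).1
      have h2 := lammin_sub_le hd (S u) (S s) (hposdef s hs).1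
      have h3 : ∑ i, ∑ j, |S u i j - S s i j| = ∑ i, ∑ j, |S s i j - S u i j| :=
        Finset.sum_congr rfl fun i _ => Finset.sum_congr rfl fun j _ => abs_sub_comm _ _
      rw [h3] at h2
      rw [abs_le]
      constructor <;> linarith
    have hDten : Tendsto (fun s => ∑ i, ∑ j, |S s i j - S u i j|) (𝓝[Ici (0:ℝ)] u) (𝓝 0) := by
      have h4 : Tendsto (fun s => ∑ i, ∑ j, |S s i j - S u i j|) (𝓝[Ici (0:ℝ)] u)
          (𝓝 (∑ i : Fin d, ∑ j : Fin d, |S u i j - S u i j|)) :=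
        tendsto_finset_sum _ fun i _ => tendsto_finset_sum _ fun j _ =>
          ((hcontS i j u hu).sub tendsto_const_nhds).abs
      simpa using h4
    rw [ContinuousWithinAt, tendsto_iff_dist_tendsto_zero]
    refine squeeze_zero' (Filter.Eventually.of_forall fun s => dist_nonneg) ?_ hDten
    filter_upwards [self_mem_nhdsWithin] with s hs
    rw [Real.dist_eq]
    exact hbound s hs
  -- Q(0) ≥ c
  have hlam0 : c ≤ lammin (S 0) := by
    refine le_lammin hd _ fun w hw => ?_
    have h5 := h0.dotProduct_mulVec_nonneg w
    have h6 : star w = w := by funext i; simp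
    rw [h6, sub_mulVec, smul_mulVec, one_mulVec, dotProduct_sub, dotProduct_smul,
      smul_eq_mul, hw, mul_one] at h5
    simp only [quadF]
    linarith
  -- main claim
  set K : ℝ := |β| + 1 with hK
  have key : ∀ ε > (0:ℝ), ∀ u ∈ Icc (0:ℝ) t,
      Real.exp (β * u) * c - ε * Real.exp (K * u) ≤ lammin (S u) := by
    intro ε hε
    by_contra hA
    push_neg at hA
    obtain ⟨u₁, hu₁, hu₁lt⟩ := hA
    set g : ℝ → ℝ := fun s => Real.exp (β * s) * c - ε * Real.exp (K * s) with hg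
    have hgcont : Continuous g := by fun_prop
    set φ : ℝ → ℝ := fun s => lammin (S s) - g s with hφ
    have hφcont : ContinuousOn φ (Icc (0:ℝ) t) :=
      (hlamcont.mono Icc_subset_Ici_self).sub (hgcont.continuousOn)
    set A : Set ℝ := Icc (0:ℝ) t ∩ φ ⁻¹' (Iic 0) with hA'
    have hAne : A.Nonempty := by
      refine ⟨u₁, hu₁, ?_⟩
      show φ u₁ ≤ 0
      have he : φ u₁ = lammin (S u₁) - (Real.exp (β * u₁) * c - ε * Real.exp (K * u₁)) := rfl
      rw [he]
      linarith
    have hAcl : IsClosed A := hφcont.preimage_isClosed_of_isClosed isClosed_Icc isClosed_Iic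
    have hAbdd : BddBelow A := (bddBelow_Icc : BddBelow (Icc (0:ℝ) t)).mono (inter_subset_left)
    set t₀ : ℝ := sInf A with ht₀
    have ht₀A : t₀ ∈ A := hAcl.csInf_mem hAne hAbdd
    have ht₀mem : t₀ ∈ Icc (0:ℝ) t := ht₀A.1
    have hφt₀ : φ t₀ ≤ 0 := ht₀A.2
    have ht₀Ici : t₀ ∈ Ici (0:ℝ) := ht₀mem.1
    have ht₀pos : 0 < t₀ := by
      rcases lt_or_eq_of_le ht₀mem.1 with h | h
      · exact h
      · exfalso
        have h7 : φ 0 = lammin (S 0) - (c - ε) := by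
          simp [hφ, hg]
        rw [← h] at hφt₀
        rw [h7] at hφt₀
        linarith
    have hbefore : ∀ u, 0 ≤ u → u < t₀ → 0 < φ u := by
      intro u hu0 hut₀
      by_contra hle
      push_neg at hle
      have : u ∈ A := ⟨⟨hu0, le_trans hut₀.le ht₀mem.2⟩, hle⟩
      exact absurd (csInf_le hAbdd this) (not_le.mpr hut₀)
    have hφt₀0 : φ t₀ = 0 := by
      refine le_antisymm hφt₀ ?_
      have hclos : t₀ ∈ closure (Ico (0:ℝ) t₀) := by
        rw [closure_Ico ht₀pos.ne]
        exact ⟨ht₀mem.1, le_rfl⟩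
      haveI hnb : (𝓝[Ico (0:ℝ) t₀] t₀).NeBot := mem_closure_iff_nhdsWithin_neBot.mp hclos
      have hsub : Ico (0:ℝ) t₀ ⊆ Icc (0:ℝ) t :=
        fun u hu => ⟨hu.1, le_trans hu.2.le ht₀mem.2⟩
      have htend : Tendsto φ (𝓝[Ico (0:ℝ) t₀] t₀) (𝓝 (φ t₀)) :=
        (hφcont t₀ ht₀mem).mono_left (nhdsWithin_mono _ hsub)
      refine ge_of_tendsto htend ?_
      filter_upwards [self_mem_nhdsWithin] with u hu
      exact (hbefore u hu.1 hu.2).le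
    -- eigenvector at t₀
    obtain ⟨w, hw1, hwval, hweig, hwlow⟩ := eigmin hd (S t₀) (hposdef t₀ ht₀Ici).1
    have hQ := heig t₀ ht₀Ici w hw1 (lammin (S t₀)) hweig hwlow
    have hμ : lammin (S t₀) = g t₀ := by
      have := hφt₀0
      simp only [hφ] at this
      linarith
    -- derivative of comparison function
    set h : ℝ → ℝ := fun s => w ⬝ᵥ (S s).mulVec w - g s with hhdef
    have hQd : HasDerivAt (fun s => w ⬝ᵥ (S s).mulVec w) (w ⬝ᵥ (S' t₀).mulVec w) t₀ :=
      hasDerivAt_quad S S' w t₀ (hderiv t₀ ht₀Ici)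
    have hgd : HasDerivAt g (β * Real.exp (β * t₀) * c - ε * (K * Real.exp (K * t₀))) t₀ := by
      have h1 : HasDerivAt (fun s => Real.exp (β * s)) (Real.exp (β * t₀) * β) t₀ := by
        simpa using ((hasDerivAt_id t₀).const_mul β).exp
      have h2 : HasDerivAt (fun s => Real.exp (K * s)) (Real.exp (K * t₀) * K) t₀ := by
        simpa using ((hasDerivAt_id t₀).const_mul K).exp
      have h3 := (h1.mul_const c).sub (h2.const_mul ε)
      exact h3.congr_deriv (by ring)
    have hhd : HasDerivAt h
        (w ⬝ᵥ (S' t₀).mulVec w - (β * Real.exp (β * t₀) * c - ε * (K * Real.exp (K * t₀)))) t₀ :=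
      hQd.sub hgd
    have hquadt₀ : w ⬝ᵥ (S t₀).mulVec w = g t₀ := by
      have : quadF (S t₀) w = lammin (S t₀) := hwval
      simp only [quadF] at this
      rw [this, hμ]
    have hderpos : 0 < w ⬝ᵥ (S' t₀).mulVec w -
        (β * Real.exp (β * t₀) * c - ε * (K * Real.exp (K * t₀))) := by
      rw [hquadt₀] at hQ
      have hKβ : β + 1 ≤ K := by
        rw [hK]
        have := le_abs_self β
        linarith
      have hexpK : 0 < Real.exp (K * t₀) := Real.exp_pos _
      have : β * g t₀ = β * Real.exp (β * t₀) * c - β * (ε * Real.exp (K * t₀)) := by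
        rw [hg]; ring
      nlinarith [hQ, mul_pos hε hexpK]
    have hht₀ : h t₀ = 0 := by
      simp only [hhdef]
      rw [hquadt₀]
      ring
    -- slope argument
    rw [hasDerivAt_iff_tendsto_slope] at hhd
    have hev1 : ∀ᶠ u in 𝓝[≠] t₀, 0 < slope h t₀ u := hhd.eventually (eventually_gt_nhds hderpos)
    have hmono : 𝓝[Iio t₀] t₀ ≤ 𝓝[≠] t₀ :=
      nhdsWithin_mono _ (fun u hu => ne_of_lt hu)
    have hev2 : ∀ᶠ u in 𝓝[Iio t₀] t₀, 0 < u :=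
      eventually_nhdsWithin_of_eventually_nhds (eventually_gt_nhds ht₀pos)
    have hev3 : ∀ᶠ u in 𝓝[Iio t₀] t₀, u < t₀ := by
      filter_upwards [self_mem_nhdsWithin] with u hu
      exact hu
    obtain ⟨u, hu1, hu2, hu3⟩ := ((hev1.filter_mono hmono).and (hev2.and hev3)).exists
    rw [slope_def_field] at hu1
    rw [hht₀] at hu1
    -- (h u - 0)/(u - t₀) > 0, u - t₀ < 0 ⇒ h u < 0
    have hnum : h u - 0 < 0 := by
      rcases div_pos_iff.mp hu1 with ⟨hn, hdn⟩ | ⟨hn, hdn⟩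
      · exfalso; linarith [ (sub_neg.mpr hu3 : u - t₀ < 0) ]
      · exact hn
    have hhu : h u < 0 := by linarith
    have hpos : 0 < φ u := hbefore u hu2.le hu3
    have hlamle : lammin (S u) ≤ w ⬝ᵥ (S u).mulVec w := lammin_le (S u) hw1
    have : 0 < h u := by
      simp only [hhdef]
      simp only [hφ] at hpos
      linarith
    linarith
  -- conclude: exp(βt) c ≤ lammin (S t)
  have hfinal : Real.exp (β * t) * c ≤ lammin (S t) := by
    by_contra hlt
    push_neg at hlt
    set ε : ℝ := (Real.exp (β * t) * c - lammin (S t)) / (2 * Real.exp (K * t)) with hεdef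
    have hεpos : 0 < ε := by
      apply div_pos
      · linarith
      · positivity
    have h8 := key ε hεpos t ⟨ht, le_rfl⟩
    have h9 : ε * Real.exp (K * t) = (Real.exp (β * t) * c - lammin (S t)) / 2 := by
      rw [hεdef]
      field_simp
    rw [h9] at h8
    linarith
  -- assemble PosSemidef
  refine PosSemidef.of_dotProduct_mulVec_nonneg ?_ ?_
  · refine ((hposdef t ht).1.sub ?_)
    show _ᴴ = _
    rw [Matrix.conjTranspose_smul, Matrix.conjTranspose_one]
    simp
  · intro x
    have h6 : star x = x := by funext i; simp
    rw [h6, sub_mulVec, smul_mulVec, one_mulVec, dotProduct_sub, dotProduct_smul,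
      smul_eq_mul]
    obtain ⟨w, hw1, hwval, hweig, hwlow⟩ := eigmin hd (S t) (hposdef t ht).1
    have h10 := hwlow x
    have h11 : 0 ≤ x ⬝ᵥ x := by
      rw [dotProduct]
      exact Finset.sum_nonneg fun i _ => mul_self_nonneg _
    have h12 : Real.exp (β * t) * c * (x ⬝ᵥ x) ≤ lammin (S t) * (x ⬝ᵥ x) := by
      nlinarith [hfinal]
    linarith
end

section
/- Let T ∈ (0,∞], let B : [0,T) → ℝ^{d×d} be continuous, and let Σ : [0,T) → ℝ^{d×d} be differentiable with Σ(t) symmetric for every t and satisfying the linear evolution equation Σ'(t) = B(t)ᵀ Σ(t) + Σ(t) B(t) for all t ∈ [0,T). If Σ(0) is positive semidefinite of rank l, then Σ(t) is positive semidefinite of rank l for every t ∈ [0,T). -/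
open Matrix Set

variable {d : ℕ}

/-- Congruence of matrices by an invertible matrix. -/
def MCong (M N : Matrix (Fin d) (Fin d) ℝ) : Prop :=
  ∃ A : Matrix (Fin d) (Fin d) ℝ, IsUnit A.det ∧ N = Aᵀ * M * A

lemma MCong.refl (M : Matrix (Fin d) (Fin d) ℝ) : MCong M M :=
  ⟨1, by simp, by simp⟩

lemma MCong.symm {M N : Matrix (Fin d) (Fin d) ℝ} (h : MCong M N) : MCong N M := by
  obtain ⟨A, hA, rfl⟩ := h
  have hA' : A.det ≠ 0 := by simpa [isUnit_iff_ne_zero] using hA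
  refine ⟨A⁻¹, by simp [Matrix.det_nonsing_inv, Ring.inverse_eq_inv', isUnit_iff_ne_zero, hA'], ?_⟩
  rw [Matrix.transpose_nonsing_inv]
  symm
  calc (Aᵀ)⁻¹ * (Aᵀ * M * A) * A⁻¹
      = (Aᵀ)⁻¹ * Aᵀ * M * (A * A⁻¹) := by noncomm_ring
    _ = M := by
        rw [Matrix.nonsing_inv_mul _ (by simpa using hA), Matrix.mul_nonsing_inv _ hA]
        simp

lemma MCong.trans {M N P : Matrix (Fin d) (Fin d) ℝ} (h1 : MCong M N) (h2 : MCong N P) :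
    MCong M P := by
  obtain ⟨A, hA, rfl⟩ := h1
  obtain ⟨C, hC, rfl⟩ := h2
  exact ⟨A * C, by rw [Matrix.det_mul]; exact hA.mul hC,
    by rw [Matrix.transpose_mul]; noncomm_ring⟩

lemma MCong.posSemidef {M N : Matrix (Fin d) (Fin d) ℝ} (h : MCong M N) (hM : M.PosSemidef) :
    N.PosSemidef := by
  obtain ⟨A, hA, rfl⟩ := h
  have := hM.conjTranspose_mul_mul_same A
  simpa using this

lemma MCong.rank_eq {M N : Matrix (Fin d) (Fin d) ℝ} (h : MCong M N) : N.rank = M.rank := by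
  obtain ⟨A, hA, rfl⟩ := h
  rw [Matrix.rank_mul_eq_left_of_isUnit_det A _ hA,
    Matrix.rank_mul_eq_right_of_isUnit_det Aᵀ M (by simpa using hA)]

lemma triple_entry (X Y W : Matrix (Fin d) (Fin d) ℝ) (i j : Fin d) :
    (Xᵀ * Y * W) i j = ∑ k, ∑ m, X k i * (Y k m * W m j) := by
  simp only [Matrix.mul_apply, Matrix.transpose_apply, Finset.sum_mul]
  rw [Finset.sum_comm]
  exact Finset.sum_congr rfl fun k _ => Finset.sum_congr rfl fun m _ => by ring

lemma local_cong (B S : ℝ → Matrix (Fin d) (Fin d) ℝ) (t₁ : ℝ)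
    (hB : ∀ i j, ContinuousOn (fun t => B t i j) (Icc (0:ℝ) t₁))
    (hS : ∀ t ∈ Icc (0:ℝ) t₁, ∀ i j,
      HasDerivAt (fun s => S s i j) (((B t)ᵀ * S t + S t * B t) i j) t)
    (c : ℝ) (hc : c ∈ Icc (0:ℝ) t₁) :
    ∃ ε > 0, ∀ t ∈ Icc (0:ℝ) t₁, |t - c| < ε → MCong (S c) (S t) := by
  classical
  -- bound on B
  have hBmat : ContinuousOn (fun t => (fun p => B t p.1 p.2 : Fin d × Fin d → ℝ))
      (Icc (0:ℝ) t₁) := continuousOn_pi.2 fun p => hB p.1 p.2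
  obtain ⟨K0, hK0⟩ := isCompact_Icc.exists_bound_of_continuousOn hBmat
  set K := max K0 0 with hKdef
  have hK : (0:ℝ) ≤ K := le_max_right _ _
  have hent : ∀ t ∈ Icc (0:ℝ) t₁, ∀ i j, |B t i j| ≤ K := by
    intro t ht i j
    calc |B t i j| = ‖(fun p => B t p.1 p.2 : Fin d × Fin d → ℝ) (i, j)‖ := rfl
      _ ≤ ‖(fun p => B t p.1 p.2 : Fin d × Fin d → ℝ)‖ :=
          norm_le_pi_norm (fun p : Fin d × Fin d => B t p.1 p.2) (i, j)
      _ ≤ K0 := hK0 t ht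
      _ ≤ K := le_max_left _ _
  -- the vector field
  set x₀ : Fin d × Fin d → ℝ := (fun p => (1 : Matrix (Fin d) (Fin d) ℝ) p.1 p.2) with hx₀def
  set v : ℝ → (Fin d × Fin d → ℝ) → (Fin d × Fin d → ℝ) :=
    fun t X p => -∑ k, B t p.1 k * X (k, p.2) with hvdef
  set L : NNReal := ⟨d * K + 1, by positivity⟩ with hLdef
  have hLcoe : (L : ℝ) = d * K + 1 := rfl
  have hlip : ∀ t ∈ Icc (0:ℝ) t₁, LipschitzOnWith L (v t) (Metric.closedBall x₀ 1) := by
    intro t ht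
    apply LipschitzOnWith.of_dist_le_mul
    intro X _ Y _
    rw [hLcoe]
    refine (dist_pi_le_iff (by positivity)).2 fun p => ?_
    rw [Real.dist_eq]
    have hdiff : v t X p - v t Y p = -∑ k, B t p.1 k * (X (k, p.2) - Y (k, p.2)) := by
      simp [hvdef, mul_sub, Finset.sum_sub_distrib]
      ring
    rw [hdiff, abs_neg]
    calc |∑ k, B t p.1 k * (X (k, p.2) - Y (k, p.2))|
        ≤ ∑ k, |B t p.1 k * (X (k, p.2) - Y (k, p.2))| := Finset.abs_sum_le_sum_abs _ _
      _ ≤ ∑ _k : Fin d, K * dist X Y := by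
          refine Finset.sum_le_sum fun k _ => ?_
          rw [abs_mul]
          refine mul_le_mul (hent t ht p.1 k) ?_ (abs_nonneg _) hK
          calc |X (k, p.2) - Y (k, p.2)| = dist (X (k, p.2)) (Y (k, p.2)) :=
                (Real.dist_eq _ _).symm
            _ ≤ dist X Y := dist_le_pi_dist _ _ _
      _ = (d * K) * dist X Y := by simp [Finset.sum_const, mul_assoc]
      _ ≤ (d * K + 1) * dist X Y := by
          have := dist_nonneg (x := X) (y := Y); nlinarith
  set C : ℝ := (d * K + 1) * (‖x₀‖ + 1) with hCdef
  have hC0 : 0 ≤ C := by positivity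
  have hCb : ∀ t ∈ Icc (0:ℝ) t₁, ∀ X ∈ Metric.closedBall x₀ 1, ‖v t X‖ ≤ C := by
    intro t ht X hX
    have hXn : ‖X‖ ≤ ‖x₀‖ + 1 := by
      have h1 := Metric.mem_closedBall.1 hX
      have h2 : ‖X‖ - ‖x₀‖ ≤ dist X x₀ := by
        rw [dist_eq_norm]; exact norm_sub_norm_le X x₀
      linarith
    refine (pi_norm_le_iff_of_nonneg hC0).2 fun p => ?_
    have hval : ‖v t X p‖ = |∑ k, B t p.1 k * X (k, p.2)| := by simp [hvdef]
    rw [hval]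
    calc |∑ k, B t p.1 k * X (k, p.2)| ≤ ∑ k, |B t p.1 k * X (k, p.2)| :=
          Finset.abs_sum_le_sum_abs _ _
      _ ≤ ∑ _k : Fin d, K * (‖x₀‖ + 1) := by
          refine Finset.sum_le_sum fun k _ => ?_
          rw [abs_mul]
          refine mul_le_mul (hent t ht p.1 k) ?_ (abs_nonneg _) hK
          calc |X (k, p.2)| = ‖X (k, p.2)‖ := (Real.norm_eq_abs _).symm
            _ ≤ ‖X‖ := norm_le_pi_norm X (k, p.2)
            _ ≤ ‖x₀‖ + 1 := hXn
      _ = (d * K) * (‖x₀‖ + 1) := by simp [Finset.sum_const, mul_assoc]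
      _ ≤ C := by rw [hCdef]; nlinarith [norm_nonneg x₀]
  -- Picard-Lindelöf on a small interval around c
  set ε : ℝ := 1 / (C + 1) with hεdef
  have hε : 0 < ε := by positivity
  set tMin := max (c - ε) 0 with htMin
  set tMax := min (c + ε) t₁ with htMax
  have hIccsub : Icc tMin tMax ⊆ Icc (0:ℝ) t₁ :=
    Icc_subset_Icc (le_max_right _ _) (min_le_right _ _)
  have hcmem : c ∈ Icc tMin tMax :=
    ⟨max_le (by linarith) hc.1, le_min (by linarith) hc.2⟩
  have hpl : IsPicardLindelof v (tmin := tMin) (tmax := tMax) ⟨c, hcmem⟩ x₀ 1 0 ⟨C, hC0⟩ L :=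
    { lipschitzOnWith := fun t ht => by rw [NNReal.coe_one]; exact hlip t (hIccsub ht)
      continuousOn := fun X _ => continuousOn_pi.2 fun p => by
        exact (ContinuousOn.neg (continuousOn_finset_sum _ fun k _ =>
          ((hB p.1 k).mono hIccsub).mul continuousOn_const))
      norm_le := fun t ht X hX => hCb t (hIccsub ht) X (by rwa [NNReal.coe_one] at hX)
      mul_max_le := by
        rw [NNReal.coe_one, NNReal.coe_zero, sub_zero]
        show C * max (tMax - c) (c - tMin) ≤ 1
        have hA1 : tMax - c ≤ ε := by
          rw [htMax]; have := min_le_left (c + ε) t₁; linarith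
        have hA2 : c - tMin ≤ ε := by
          rw [htMin]; have := le_max_left (c - ε) 0; linarith
        have h1 : max (tMax - c) (c - tMin) ≤ ε := max_le hA1 hA2
        calc C * max (tMax - c) (c - tMin) ≤ C * ε := mul_le_mul_of_nonneg_left h1 hC0
          _ ≤ 1 := by rw [hεdef]; rw [mul_one_div]; exact div_le_one_of_le₀ (by linarith) (by positivity) }
  obtain ⟨A, hAc, hAder⟩ := hpl.exists_eq_forall_mem_Icc_hasDerivWithinAt₀
  -- matrix versions
  set Am : ℝ → Matrix (Fin d) (Fin d) ℝ := fun t => Matrix.of (fun i j => A t (i, j)) with hAm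
  set V : ℝ → Matrix (Fin d) (Fin d) ℝ := fun t => Matrix.of (fun i j => v t (A t) (i, j))
    with hV
  have hvm : ∀ t, V t = -(B t * Am t) := by
    intro t
    ext i j
    simp [hV, hAm, hvdef, Matrix.mul_apply]
  have hAij : ∀ t ∈ Icc tMin tMax, ∀ k i,
      HasDerivWithinAt (fun s => A s (k, i)) (v t (A t) (k, i)) (Icc tMin tMax) t :=
    fun t ht k i => hasDerivWithinAt_pi.1 (hAder t ht) (k, i)
  have hSijW : ∀ t ∈ Icc tMin tMax, ∀ k m,
      HasDerivWithinAt (fun s => S s k m) (((B t)ᵀ * S t + S t * B t) k m) (Icc tMin tMax) t :=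
    fun t ht k m => (hS t (hIccsub ht) k m).hasDerivWithinAt
  -- the conserved quantities
  set g : Fin d → Fin d → ℝ → ℝ :=
    fun i j s => ∑ k, ∑ m, A s (k, i) * (S s k m * A s (m, j)) with hg
  have hgder : ∀ i j, ∀ t ∈ Icc tMin tMax, HasDerivWithinAt (g i j) 0 (Icc tMin tMax) t := by
    intro i j t ht
    have hsum : HasDerivWithinAt (g i j)
        (∑ k, ∑ m, (v t (A t) (k, i) * (S t k m * A t (m, j)) +
          A t (k, i) * (((B t)ᵀ * S t + S t * B t) k m * A t (m, j) +
            S t k m * v t (A t) (m, j)))) (Icc tMin tMax) t := by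
      refine HasDerivWithinAt.fun_sum fun k _ => HasDerivWithinAt.fun_sum fun m _ => ?_
      exact (hAij t ht k i).mul ((hSijW t ht k m).mul (hAij t ht m j))
    have hentry : (∑ k, ∑ m, (v t (A t) (k, i) * (S t k m * A t (m, j)) +
          A t (k, i) * (((B t)ᵀ * S t + S t * B t) k m * A t (m, j) +
            S t k m * v t (A t) (m, j)))) =
        ((V t)ᵀ * S t * Am t + ((Am t)ᵀ * ((B t)ᵀ * S t + S t * B t) * Am t +
          (Am t)ᵀ * S t * V t)) i j := by
      simp only [Matrix.add_apply, triple_entry, Matrix.of_apply, hAm, hV,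
        ← Finset.sum_add_distrib]
      exact Finset.sum_congr rfl fun k _ => Finset.sum_congr rfl fun m _ => by ring
    have hmat0 : (V t)ᵀ * S t * Am t + ((Am t)ᵀ * ((B t)ᵀ * S t + S t * B t) * Am t +
        (Am t)ᵀ * S t * V t) = 0 := by
      rw [hvm, Matrix.transpose_neg, Matrix.transpose_mul]
      noncomm_ring
    have : (∑ k, ∑ m, (v t (A t) (k, i) * (S t k m * A t (m, j)) +
          A t (k, i) * (((B t)ᵀ * S t + S t * B t) k m * A t (m, j) +
            S t k m * v t (A t) (m, j)))) = 0 := by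
      rw [hentry, hmat0]; simp
    exact this ▸ hsum
  have hgc : ∀ i j, ∀ x ∈ Icc tMin tMax, g i j x = g i j tMin := by
    intro i j
    refine constant_of_has_deriv_right_zero (fun x hx => (hgder i j x hx).continuousWithinAt) ?_
    intro x hx
    exact (hgder i j x (Ico_subset_Icc_self hx)).mono_of_mem_nhdsWithin
      (Icc_mem_nhdsGE_of_mem hx)
  have hAmc : Am c = 1 := by
    ext a b
    simp [hAm, hAc, hx₀def]
  have hmatconst : ∀ x ∈ Icc tMin tMax, (Am x)ᵀ * S x * Am x = S c := by
    intro x hx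
    ext i j
    have e1 : ((Am x)ᵀ * S x * Am x) i j = g i j x := by
      rw [triple_entry]; simp only [hAm, Matrix.of_apply, hg]
    have e2 : ((Am c)ᵀ * S c * Am c) i j = g i j c := by
      rw [triple_entry]; simp only [hAm, Matrix.of_apply, hg]
    calc ((Am x)ᵀ * S x * Am x) i j = g i j x := e1
      _ = g i j tMin := hgc i j x hx
      _ = g i j c := (hgc i j c hcmem).symm
      _ = ((Am c)ᵀ * S c * Am c) i j := e2.symm
      _ = S c i j := by rw [hAmc]; simp
  -- invertibility near c
  have hAcw : ContinuousWithinAt Am (Icc tMin tMax) c := by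
    refine continuousWithinAt_pi.2 fun i => continuousWithinAt_pi.2 fun j => ?_
    exact (hAij c hcmem i j).continuousWithinAt
  have hdetcw : ContinuousWithinAt (fun t => (Am t).det) (Icc tMin tMax) c :=
    ((Continuous.matrix_det continuous_id).continuousAt).comp_continuousWithinAt hAcw
  have hdetc : (Am c).det ≠ 0 := by rw [hAmc]; simp
  have hev : (fun t => (Am t).det) ⁻¹' {x | x ≠ 0} ∈ nhdsWithin c (Icc tMin tMax) :=
    hdetcw (IsOpen.mem_nhds isOpen_ne hdetc)
  obtain ⟨ε', hε', hball⟩ := Metric.mem_nhdsWithin_iff.1 hev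
  refine ⟨min ε ε', lt_min hε hε', fun t ht habs => ?_⟩
  have h1 : |t - c| < ε := lt_of_lt_of_le habs (min_le_left _ _)
  have h2 : |t - c| < ε' := lt_of_lt_of_le habs (min_le_right _ _)
  have htm : t ∈ Icc tMin tMax := by
    obtain ⟨hl, hr⟩ := abs_lt.1 h1
    exact ⟨max_le (by linarith) ht.1, le_min (by linarith) ht.2⟩
  have hdet : (Am t).det ≠ 0 := hball ⟨Metric.mem_ball.2 (by rw [Real.dist_eq]; exact h2), htm⟩
  exact MCong.symm ⟨Am t, isUnit_iff_ne_zero.2 hdet, (hmatconst t htm).symm⟩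


open scoped ENNReal

/-- Flows of the form `Σ' = Bᵀ Σ + Σ B` preserve positive semidefiniteness and the rank:
if `Σ(0)` is positive semidefinite of rank `l`, so is `Σ(t)` for every `t ∈ [0, T)`. -/
theorem flow_preserves_rank_stratum {d : ℕ} (T : ℝ≥0∞) (hT : 0 < T)
    (B S : ℝ → Matrix (Fin d) (Fin d) ℝ) (l : ℕ)
    (hBcont : ∀ i j, ContinuousOn (fun t => B t i j) {t : ℝ | 0 ≤ t ∧ ENNReal.ofReal t < T})
    (hsymm : ∀ t : ℝ, 0 ≤ t → ENNReal.ofReal t < T → (S t).IsSymm)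
    (hderiv : ∀ t : ℝ, 0 ≤ t → ENNReal.ofReal t < T → ∀ i j,
      HasDerivAt (fun s => S s i j) (((B t)ᵀ * S t + S t * B t) i j) t)
    (h0psd : (S 0).PosSemidef) (h0rank : (S 0).rank = l) :
    ∀ t : ℝ, 0 ≤ t → ENNReal.ofReal t < T → (S t).PosSemidef ∧ (S t).rank = l := by
  intro t₀ ht₀0 ht₀T
  obtain ⟨t₁, ht₀t₁, hsub⟩ : ∃ t₁ : ℝ, t₀ < t₁ ∧
      Icc (0:ℝ) t₁ ⊆ {t : ℝ | 0 ≤ t ∧ ENNReal.ofReal t < T} := by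
    by_cases hT' : T = ⊤
    · exact ⟨t₀ + 1, by linarith, fun t ht => ⟨ht.1, by simp [hT']⟩⟩
    · have h1 : t₀ < T.toReal := (ENNReal.ofReal_lt_iff_lt_toReal ht₀0 hT').1 ht₀T
      refine ⟨(t₀ + T.toReal)/2, by linarith, fun t ht => ⟨ht.1, ?_⟩⟩
      have h2 : t < T.toReal := lt_of_le_of_lt ht.2 (by linarith)
      exact (ENNReal.ofReal_lt_iff_lt_toReal ht.1 hT').2 h2
  have hB' : ∀ i j, ContinuousOn (fun t => B t i j) (Icc (0:ℝ) t₁) :=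
    fun i j => (hBcont i j).mono hsub
  have hS' : ∀ t ∈ Icc (0:ℝ) t₁, ∀ i j,
      HasDerivAt (fun s => S s i j) (((B t)ᵀ * S t + S t * B t) i j) t :=
    fun t ht i j => hderiv t (hsub ht).1 (hsub ht).2 i j
  have hloc := local_cong B S t₁ hB' hS'
  choose! εf hεf hcong using hloc
  set U : Set ℝ := ⋃ c ∈ {c : ℝ | c ∈ Icc (0:ℝ) t₁ ∧ MCong (S 0) (S c)},
    Metric.ball c (εf c) with hU
  set W : Set ℝ := ⋃ c ∈ {c : ℝ | c ∈ Icc (0:ℝ) t₁ ∧ ¬ MCong (S 0) (S c)},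
    Metric.ball c (εf c) with hW
  have hUopen : IsOpen U := isOpen_biUnion fun _ _ => Metric.isOpen_ball
  have hWopen : IsOpen W := isOpen_biUnion fun _ _ => Metric.isOpen_ball
  have hcover : Icc (0:ℝ) t₁ ⊆ U ∪ W := by
    intro t ht
    by_cases h : MCong (S 0) (S t)
    · exact Or.inl (Set.mem_biUnion ⟨ht, h⟩ (Metric.mem_ball_self (hεf t ht)))
    · exact Or.inr (Set.mem_biUnion ⟨ht, h⟩ (Metric.mem_ball_self (hεf t ht)))
  have hkey1 : ∀ x ∈ Icc (0:ℝ) t₁, x ∈ U → MCong (S 0) (S x) := by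
    intro x hx hxU
    obtain ⟨c, hc, hxb⟩ := Set.mem_iUnion₂.1 hxU
    have hdist : |x - c| < εf c := by
      have := Metric.mem_ball.1 hxb
      rwa [Real.dist_eq] at this
    exact (hc.2).trans (hcong c hc.1 x hx hdist)
  have hkey2 : ∀ x ∈ Icc (0:ℝ) t₁, x ∈ W → ¬ MCong (S 0) (S x) := by
    intro x hx hxW habs
    obtain ⟨c, hc, hxb⟩ := Set.mem_iUnion₂.1 hxW
    have hdist : |x - c| < εf c := by
      have := Metric.mem_ball.1 hxb
      rwa [Real.dist_eq] at this
    exact hc.2 (habs.trans (hcong c hc.1 x hx hdist).symm)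
  have h0mem : (0:ℝ) ∈ Icc (0:ℝ) t₁ := ⟨le_rfl, by linarith⟩
  have ht₀Icc : t₀ ∈ Icc (0:ℝ) t₁ := ⟨ht₀0, le_of_lt ht₀t₁⟩
  have hmain : MCong (S 0) (S t₀) := by
    by_contra hnot
    have ht₀W : t₀ ∈ W :=
      (hcover ht₀Icc).resolve_left fun h => hnot (hkey1 t₀ ht₀Icc h)
    have hUne : (Icc (0:ℝ) t₁ ∩ U).Nonempty :=
      ⟨0, h0mem, Set.mem_biUnion ⟨h0mem, MCong.refl (S 0)⟩ (Metric.mem_ball_self (hεf 0 h0mem))⟩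
    have hWne : (Icc (0:ℝ) t₁ ∩ W).Nonempty := ⟨t₀, ht₀Icc, ht₀W⟩
    obtain ⟨x, hxIcc, hxU, hxW⟩ :=
      isPreconnected_Icc U W hUopen hWopen hcover hUne hWne
    exact hkey2 x hxIcc hxW (hkey1 x hxIcc hxU)
  exact ⟨hmain.posSemidef h0psd, by rw [hmain.rank_eq, h0rank]⟩
end

section
/- Let T ∈ (0,∞], let A : [0,T) → ℝ^{d×d} be continuous with A(t) symmetric and of operator norm ‖A(t)‖ ≤ β for every t, and let Σ : [0,T) → ℝ^{d×d} be differentiable with Σ(t) symmetric, Σ(0) positive definite, and Σ'(t) = −(1/2)(Σ(t) A(t) + A(t) Σ(t)) for all t. Let λ_min and λ_max denote the smallest and largest eigenvalues of Σ(0). Then for all t ∈ [0,T): e^{−βt} λ_min · I ≤ Σ(t) ≤ e^{βt} λ_max · I in the Loewner order. -/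
open Matrix Set
open scoped ENNReal

open Filter Topology


lemma posSemidef_of_real {d : ℕ} (M : Matrix (Fin d) (Fin d) ℝ) (hsymm : Mᵀ = M)
    (h : ∀ x : Fin d → ℝ, 0 ≤ x ⬝ᵥ M.mulVec x) : M.PosSemidef := by
  refine Matrix.PosSemidef.of_dotProduct_mulVec_nonneg ?_ fun x => by simpa using h x
  rw [Matrix.IsHermitian, Matrix.conjTranspose_eq_transpose_of_trivial, hsymm]

lemma mulVec_eq_zero_of_quad {d : ℕ} {M : Matrix (Fin d) (Fin d) ℝ} (hM : M.PosSemidef)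
    {v : Fin d → ℝ} (hv : v ⬝ᵥ M.mulVec v = 0) : M.mulVec v = 0 := by
  exact (hM.dotProduct_mulVec_zero_iff v).mp (by simpa using hv)

lemma quad_sub_smul_one {d : ℕ} (N : Matrix (Fin d) (Fin d) ℝ) (r : ℝ) (x : Fin d → ℝ) :
    x ⬝ᵥ (N - r • 1).mulVec x = x ⬝ᵥ N.mulVec x - r * (x ⬝ᵥ x) := by
  simp [Matrix.sub_mulVec, Matrix.smul_mulVec, Matrix.one_mulVec,
    dotProduct_sub, dotProduct_smul, smul_eq_mul]

lemma key_lemma {d : ℕ} (β t₁ : ℝ) (A S : ℝ → Matrix (Fin d) (Fin d) ℝ)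
    (hSsymm : ∀ t ∈ Icc (0:ℝ) t₁, (S t).IsSymm)
    (hAbound : ∀ t ∈ Icc (0:ℝ) t₁, ∀ v : Fin d → ℝ, |v ⬝ᵥ (A t).mulVec v| ≤ β * (v ⬝ᵥ v))
    (hderiv : ∀ t ∈ Icc (0:ℝ) t₁, ∀ i j,
      HasDerivAt (fun s => S s i j) ((-(1/2 : ℝ) • (S t * A t + A t * S t)) i j) t)
    (l ε σ : ℝ) (hε : 0 < ε) (hl : l ≠ 0)
    (hσ : σ = if 0 < l then -(β+ε) else (β+ε))
    (hinit : ∀ w : Fin d → ℝ, w ⬝ᵥ w = 1 → l < w ⬝ᵥ (S 0).mulVec w) :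
    ∀ t ∈ Icc (0:ℝ) t₁, ∀ w : Fin d → ℝ, w ⬝ᵥ w = 1 →
      l * Real.exp (σ * t) ≤ w ⬝ᵥ (S t).mulVec w := by
  by_contra hcon
  push_neg at hcon
  obtain ⟨t₂, ht₂, w₂, hw₂, hq₂⟩ := hcon
  set q : ℝ × (Fin d → ℝ) → ℝ :=
    fun p => p.2 ⬝ᵥ (S p.1).mulVec p.2 - l * Real.exp (σ * p.1) with hqdef
  -- continuity
  have hScont : ∀ i j, ∀ t ∈ Icc (0:ℝ) t₁, ContinuousAt (fun s => S s i j) t :=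
    fun i j t ht => (hderiv t ht i j).continuousAt
  have hqcont : ∀ p : ℝ × (Fin d → ℝ), p.1 ∈ Icc (0:ℝ) t₁ → ContinuousAt q p := by
    intro p hp
    apply ContinuousAt.sub
    · have hfun : (fun p : ℝ × (Fin d → ℝ) => p.2 ⬝ᵥ (S p.1).mulVec p.2)
           = fun p => ∑ i, ∑ j, p.2 i * S p.1 i j * p.2 j := by
        funext p; simp [dotProduct, Matrix.mulVec, Finset.mul_sum, mul_assoc]
      rw [hfun]
      apply tendsto_finset_sum; intro i _
      apply tendsto_finset_sum; intro j _
      exact (((continuous_apply i).comp continuous_snd).continuousAt.mul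
        ((hScont i j p.1 hp).comp continuous_fst.continuousAt)).mul
        ((continuous_apply j).comp continuous_snd).continuousAt
    · exact (continuous_const.mul
        (Real.continuous_exp.comp (continuous_const.mul continuous_fst))).continuousAt
  -- the sphere
  set sph : Set (Fin d → ℝ) := {w | w ⬝ᵥ w = 1} with hsphdef
  have hsphclosed : IsClosed sph := by
    have : sph = (fun w : Fin d → ℝ => w ⬝ᵥ w) ⁻¹' {1} := rfl
    rw [this]
    refine IsClosed.preimage ?_ isClosed_singleton
    have : (fun w : Fin d → ℝ => w ⬝ᵥ w) = fun w => ∑ i, w i * w i := by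
      funext w; simp [dotProduct]
    rw [this]
    exact continuous_finset_sum _ fun i _ => (continuous_apply i).mul (continuous_apply i)
  have hsphcompact : IsCompact sph := by
    apply Metric.isCompact_of_isClosed_isBounded hsphclosed
    apply (Metric.isBounded_closedBall (x := (0 : Fin d → ℝ)) (r := 1)).subset
    intro w hw
    rw [Metric.mem_closedBall, dist_zero_right]
    rw [pi_norm_le_iff_of_nonneg zero_le_one]
    intro i
    rw [Real.norm_eq_abs, abs_le_one_iff_mul_self_le_one]
    have h1 : w i * w i ≤ w ⬝ᵥ w := by
      have : ∀ j ∈ Finset.univ, 0 ≤ w j * w j := fun j _ => mul_self_nonneg _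
      exact Finset.single_le_sum this (Finset.mem_univ i)
    rw [hw] at h1; exact h1
  -- the bad set
  set K : Set (ℝ × (Fin d → ℝ)) := ((Icc (0:ℝ) t₁) ×ˢ sph) ∩ q ⁻¹' (Iic 0) with hKdef
  have hKne : K.Nonempty := ⟨(t₂, w₂), ⟨⟨ht₂, hw₂⟩, by simp only [mem_preimage, mem_Iic]; simp only [hqdef]; linarith⟩⟩
  have hKcompact : IsCompact K := by
    refine IsCompact.of_isClosed_subset (isCompact_Icc.prod hsphcompact) ?_ inter_subset_left
    refine ContinuousOn.preimage_isClosed_of_isClosed ?_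
      (isClosed_Icc.prod hsphclosed) isClosed_Iic
    exact fun p hp => (hqcont p hp.1).continuousWithinAt
  set B : Set ℝ := Prod.fst '' K with hBdef
  have hBcompact : IsCompact B := hKcompact.image continuous_fst
  have hBne : B.Nonempty := hKne.image _
  set t₀ : ℝ := sInf B with ht₀def
  have ht₀B : t₀ ∈ B := hBcompact.sInf_mem hBne
  obtain ⟨p₀, hp₀K, hp₀1⟩ := ht₀B
  set v : Fin d → ℝ := p₀.2 with hvdef
  have ht₀Icc : t₀ ∈ Icc (0:ℝ) t₁ := hp₀1 ▸ hp₀K.1.1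
  have hv : v ⬝ᵥ v = 1 := hp₀K.1.2
  have hqv : q (t₀, v) ≤ 0 := by
    have := hp₀K.2
    rw [mem_preimage, mem_Iic] at this
    rwa [show ((t₀ : ℝ), v) = p₀ from Prod.ext hp₀1.symm rfl]
  -- positivity before t₀
  have hlow : ∀ s, s ∈ Ico (0:ℝ) t₀ → ∀ w, w ⬝ᵥ w = 1 → 0 < q (s, w) := by
    intro s hs w hw
    by_contra hle
    push_neg at hle
    have hsK : (s, w) ∈ K :=
      ⟨⟨⟨hs.1, le_trans hs.2.le ht₀Icc.2⟩, hw⟩, by rwa [mem_preimage, mem_Iic]⟩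
    have : t₀ ≤ s := csInf_le hBcompact.isBounded.bddBelow ⟨(s, w), hsK, rfl⟩
    exact absurd this (not_le.mpr hs.2)
  -- t₀ > 0
  have ht₀pos : 0 < t₀ := by
    rcases lt_or_eq_of_le ht₀Icc.1 with h | h
    · exact h
    · exfalso
      have h0 := hinit v hv
      have hgt : q (0, v) > 0 := by simp only [hqdef]; simp; linarith
      rw [← h] at hqv; linarith
  haveI hne : (𝓝[Ico (0:ℝ) t₀] t₀).NeBot := by
    rw [← mem_closure_iff_nhdsWithin_neBot, closure_Ico ht₀pos.ne, right_mem_Icc]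
    exact ht₀pos.le
  -- nonnegativity at t₀
  have hge : ∀ w, w ⬝ᵥ w = 1 → 0 ≤ q (t₀, w) := by
    intro w hw
    have hc : ContinuousAt (fun s : ℝ => q (s, w)) t₀ := by
      show ContinuousAt (q ∘ fun s : ℝ => (s, w)) t₀
      exact ContinuousAt.comp (hqcont (t₀, w) ht₀Icc)
        ((continuous_id.prodMk continuous_const).continuousAt)
    refine ge_of_tendsto (x := 𝓝[Ico (0:ℝ) t₀] t₀) (hc.tendsto.mono_left nhdsWithin_le_nhds) ?_
    filter_upwards [self_mem_nhdsWithin] with s hs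
    exact (hlow s hs w hw).le
  have heq : q (t₀, v) = 0 := le_antisymm hqv (hge v hv)
  set c : ℝ := l * Real.exp (σ * t₀) with hcdef
  have hvSv : v ⬝ᵥ (S t₀).mulVec v = c := by
    simp only [hqdef] at heq; linarith
  -- M := S t₀ - c • 1 is PSD with v in kernel
  have hMpsd : (S t₀ - c • 1).PosSemidef := by
    apply posSemidef_of_real
    · rw [Matrix.transpose_sub, Matrix.transpose_smul, Matrix.transpose_one, hSsymm t₀ ht₀Icc]
    · intro x
      rw [quad_sub_smul_one]
      rcases eq_or_ne x 0 with rfl | hx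
      · simp
      · have hxx : 0 < x ⬝ᵥ x := by
          rcases lt_or_eq_of_le (Finset.sum_nonneg fun i _ => mul_self_nonneg (x i) :
              (0:ℝ) ≤ x ⬝ᵥ x) with h' | h'
          · exact h'
          · exact absurd (dotProduct_self_eq_zero.mp h'.symm) hx
        set s := Real.sqrt (x ⬝ᵥ x) with hs
        have hs0 : 0 < s := Real.sqrt_pos.mpr hxx
        have hss : s * s = x ⬝ᵥ x := Real.mul_self_sqrt hxx.le
        have hw : (s⁻¹ • x) ⬝ᵥ (s⁻¹ • x) = 1 := by
          simp only [smul_dotProduct, dotProduct_smul, smul_eq_mul]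
          rw [← hss]; field_simp
        have h2 := hge _ hw
        simp only [hqdef] at h2
        have h3 : (s⁻¹ • x) ⬝ᵥ (S t₀).mulVec (s⁻¹ • x)
            = (s⁻¹ * s⁻¹) * (x ⬝ᵥ (S t₀).mulVec x) := by
          simp only [Matrix.mulVec_smul, smul_dotProduct, dotProduct_smul,
            smul_eq_mul]
          ring
        rw [h3] at h2
        have h4 := mul_le_mul_of_nonneg_left h2 hxx.le
        have key : (x ⬝ᵥ x) * ((s⁻¹ * s⁻¹) * (x ⬝ᵥ (S t₀).mulVec x)) = x ⬝ᵥ (S t₀).mulVec x := by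
          rw [← hss]; field_simp
        nlinarith [h4, key]
  have hMv : (S t₀ - c • 1).mulVec v = 0 := by
    apply mulVec_eq_zero_of_quad hMpsd
    rw [quad_sub_smul_one, hvSv, hv]; ring
  have hSv : (S t₀).mulVec v = c • v := by
    have : (S t₀ - c • 1).mulVec v = (S t₀).mulVec v - c • v := by
      rw [Matrix.sub_mulVec, Matrix.smul_mulVec, Matrix.one_mulVec]
    rw [this] at hMv
    exact sub_eq_zero.mp hMv
  -- the derivative at t₀
  set x : ℝ := v ⬝ᵥ (A t₀).mulVec v with hxdef
  have hxb : |x| ≤ β := by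
    have := hAbound t₀ ht₀Icc v
    rwa [hv, mul_one] at this
  have hβ0 : 0 ≤ β := le_trans (abs_nonneg x) hxb
  set D : Matrix (Fin d) (Fin d) ℝ := (-(1/2 : ℝ) • (S t₀ * A t₀ + A t₀ * S t₀)) with hDdef
  have hf1 : HasDerivAt (fun s => v ⬝ᵥ (S s).mulVec v) (v ⬝ᵥ D.mulVec v) t₀ := by
    have hfun : (fun s => v ⬝ᵥ (S s).mulVec v) = fun s => ∑ i, ∑ j, v i * S s i j * v j := by
      funext s; simp [dotProduct, Matrix.mulVec, Finset.mul_sum, mul_assoc]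
    have hval : v ⬝ᵥ D.mulVec v = ∑ i, ∑ j, v i * D i j * v j := by
      simp [dotProduct, Matrix.mulVec, Finset.mul_sum, mul_assoc]
    rw [hfun, hval]
    apply HasDerivAt.fun_sum; intro i _
    apply HasDerivAt.fun_sum; intro j _
    exact ((hderiv t₀ ht₀Icc i j).const_mul (v i)).mul_const (v j)
  have hvDv : v ⬝ᵥ D.mulVec v = -(c * x) := by
    have h1 : v ⬝ᵥ (A t₀ * S t₀).mulVec v = c * x := by
      rw [← Matrix.mulVec_mulVec, hSv, Matrix.mulVec_smul, dotProduct_smul, smul_eq_mul]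
    have h2 : v ⬝ᵥ (S t₀ * A t₀).mulVec v = c * x := by
      rw [← Matrix.mulVec_mulVec, Matrix.dotProduct_mulVec]
      have hvS : v ᵥ* S t₀ = c • v := by
        nth_rewrite 1 [← hSsymm t₀ ht₀Icc]
        rw [Matrix.vecMul_transpose, hSv]
      rw [hvS, smul_dotProduct, smul_eq_mul]
    have h3 : v ⬝ᵥ D.mulVec v
        = -(1/2 : ℝ) * (v ⬝ᵥ (S t₀ * A t₀).mulVec v + v ⬝ᵥ (A t₀ * S t₀).mulVec v) := by
      rw [hDdef, Matrix.smul_mulVec, dotProduct_smul, Matrix.add_mulVec,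
        dotProduct_add, smul_eq_mul]
    rw [h3, h1, h2]; ring
  have hf2 : HasDerivAt (fun s => l * Real.exp (σ * s)) (l * (Real.exp (σ * t₀) * σ)) t₀ := by
    have h := ((hasDerivAt_id t₀).const_mul σ).exp
    have h2 := h.const_mul l
    simpa using h2
  have hF : HasDerivAt (fun s => q (s, v)) (-(c * x) - l * (Real.exp (σ * t₀) * σ)) t₀ := by
    have : (fun s => q (s, v)) = fun s => v ⬝ᵥ (S s).mulVec v - l * Real.exp (σ * s) := rfl
    rw [this, ← hvDv]
    exact hf1.sub hf2
  -- the derivative is positive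
  have hppos : 0 < -(c * x) - l * (Real.exp (σ * t₀) * σ) := by
    have hexp : 0 < Real.exp (σ * t₀) := Real.exp_pos _
    have habs := abs_le.mp hxb
    rcases lt_or_ge 0 l with hlpos | hlneg
    · rw [if_pos hlpos] at hσ
      have hc : 0 < c := mul_pos hlpos hexp
      have h1 : c * x ≤ c * β := mul_le_mul_of_nonneg_left habs.2 hc.le
      have h2 : l * (Real.exp (σ * t₀) * σ) = c * σ := by rw [hcdef]; ring
      rw [h2, hσ]
      nlinarith [mul_pos hc hε]
    · have hlneg' : l < 0 := lt_of_le_of_ne hlneg hl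
      rw [if_neg (not_lt.mpr hlneg)] at hσ
      have hc : c < 0 := mul_neg_of_neg_of_pos hlneg' hexp
      have h1 : (-c) * (-β) ≤ (-c) * x := mul_le_mul_of_nonneg_left habs.1 (by linarith)
      have h2 : l * (Real.exp (σ * t₀) * σ) = c * σ := by rw [hcdef]; ring
      rw [h2, hσ]
      nlinarith [mul_pos (neg_pos.mpr hc) hε]
  -- contradiction via slope
  have hslope := hasDerivAt_iff_tendsto_slope.mp hF
  have hmono : 𝓝[Ico (0:ℝ) t₀] t₀ ≤ 𝓝[≠] t₀ :=
    nhdsWithin_mono _ (fun s hs => ne_of_lt hs.2)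
  have hev : ∀ᶠ s in 𝓝[Ico (0:ℝ) t₀] t₀, 0 < slope (fun s => q (s, v)) t₀ s :=
    (hslope.mono_left hmono).eventually (eventually_gt_nhds hppos)
  obtain ⟨s, hspos, hsmem⟩ := (hev.and self_mem_nhdsWithin).exists
  have hfs : 0 < q (s, v) := hlow s hsmem v hv
  have hslt : slope (fun s => q (s, v)) t₀ s < 0 := by
    rw [slope_def_field, heq, sub_zero]
    exact div_neg_of_pos_of_neg hfs (by linarith [hsmem.2])
  linarith

open scoped ENNReal

lemma unit_to_all {d : ℕ} (M : Matrix (Fin d) (Fin d) ℝ) (r : ℝ)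
    (h : ∀ w : Fin d → ℝ, w ⬝ᵥ w = 1 → r ≤ w ⬝ᵥ M.mulVec w) (x : Fin d → ℝ) :
    r * (x ⬝ᵥ x) ≤ x ⬝ᵥ M.mulVec x := by
  rcases eq_or_ne x 0 with rfl | hx
  · simp
  · have hxx : 0 < x ⬝ᵥ x := by
      rcases lt_or_eq_of_le (Finset.sum_nonneg fun i _ => mul_self_nonneg (x i) :
          (0:ℝ) ≤ x ⬝ᵥ x) with h' | h'
      · exact h'
      · exact absurd (dotProduct_self_eq_zero.mp h'.symm) hx
    set s := Real.sqrt (x ⬝ᵥ x) with hs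
    have hs0 : 0 < s := Real.sqrt_pos.mpr hxx
    have hss : s * s = x ⬝ᵥ x := Real.mul_self_sqrt hxx.le
    have hw : (s⁻¹ • x) ⬝ᵥ (s⁻¹ • x) = 1 := by
      simp only [smul_dotProduct, dotProduct_smul, smul_eq_mul]
      rw [← hss]; field_simp
    have h2 := h _ hw
    have h3 : (s⁻¹ • x) ⬝ᵥ M.mulVec (s⁻¹ • x) = (s⁻¹ * s⁻¹) * (x ⬝ᵥ M.mulVec x) := by
      simp only [Matrix.mulVec_smul, smul_dotProduct, dotProduct_smul, smul_eq_mul]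
      ring
    rw [h3] at h2
    have h4 := mul_le_mul_of_nonneg_left h2 hxx.le
    have key : (x ⬝ᵥ x) * ((s⁻¹ * s⁻¹) * (x ⬝ᵥ M.mulVec x)) = x ⬝ᵥ M.mulVec x := by
      rw [← hss]; field_simp
    nlinarith [h4, key]

lemma quad_smul_one_sub {d : ℕ} (N : Matrix (Fin d) (Fin d) ℝ) (r : ℝ) (x : Fin d → ℝ) :
    x ⬝ᵥ (r • 1 - N).mulVec x = r * (x ⬝ᵥ x) - x ⬝ᵥ N.mulVec x := by
  simp [Matrix.sub_mulVec, Matrix.smul_mulVec, Matrix.one_mulVec,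
    dotProduct_sub, dotProduct_smul, smul_eq_mul]

/-- A priori two-sided exponential eigenvalue bounds along the flow
`Σ' = −(1/2)(ΣA + AΣ)` with `A(t)` symmetric of operator norm at most `β`
(for symmetric matrices, `‖A‖ ≤ β` iff `|vᵀAv| ≤ β|v|²` for all `v`):
`e^{−βt} λ_min · I ≤ Σ(t) ≤ e^{βt} λ_max · I`, where `λ_min · I ≤ Σ(0) ≤ λ_max · I`. -/
theorem two_sided_exponential_eigenvalue_bound {d : ℕ} (T : ℝ≥0∞) (hT : 0 < T) (β : ℝ)
    (A S : ℝ → Matrix (Fin d) (Fin d) ℝ)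
    (hAcont : ∀ i j, ContinuousOn (fun t => A t i j) {t : ℝ | 0 ≤ t ∧ ENNReal.ofReal t < T})
    (hAsymm : ∀ t : ℝ, 0 ≤ t → ENNReal.ofReal t < T → (A t).IsSymm)
    (hAbound : ∀ t : ℝ, 0 ≤ t → ENNReal.ofReal t < T →
      ∀ v : Fin d → ℝ, |v ⬝ᵥ (A t).mulVec v| ≤ β * (v ⬝ᵥ v))
    (hSsymm : ∀ t : ℝ, 0 ≤ t → ENNReal.ofReal t < T → (S t).IsSymm)
    (hS0 : (S 0).PosDef)
    (hderiv : ∀ t : ℝ, 0 ≤ t → ENNReal.ofReal t < T → ∀ i j,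
      HasDerivAt (fun s => S s i j) ((-(1/2 : ℝ) • (S t * A t + A t * S t)) i j) t)
    (lmin lmax : ℝ)
    (hmin : (S 0 - lmin • (1 : Matrix (Fin d) (Fin d) ℝ)).PosSemidef)
    (hmax : (lmax • (1 : Matrix (Fin d) (Fin d) ℝ) - S 0).PosSemidef) :
    ∀ t : ℝ, 0 ≤ t → ENNReal.ofReal t < T →
      (S t - (Real.exp (-β * t) * lmin) • (1 : Matrix (Fin d) (Fin d) ℝ)).PosSemidef ∧
      ((Real.exp (β * t) * lmax) • (1 : Matrix (Fin d) (Fin d) ℝ) - S t).PosSemidef := by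
  intro t ht htT
  have hdom : ∀ s ∈ Icc (0:ℝ) t, 0 ≤ s ∧ ENNReal.ofReal s < T :=
    fun s hs => ⟨hs.1, lt_of_le_of_lt (ENNReal.ofReal_le_ofReal hs.2) htT⟩
  have htIcc : t ∈ Icc (0:ℝ) t := ⟨ht, le_rfl⟩
  have hS' : ∀ s ∈ Icc (0:ℝ) t, (S s).IsSymm :=
    fun s hs => hSsymm s (hdom s hs).1 (hdom s hs).2
  have hA' : ∀ s ∈ Icc (0:ℝ) t, ∀ v : Fin d → ℝ, |v ⬝ᵥ (A s).mulVec v| ≤ β * (v ⬝ᵥ v) :=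
    fun s hs => hAbound s (hdom s hs).1 (hdom s hs).2
  have hD' : ∀ s ∈ Icc (0:ℝ) t, ∀ i j,
      HasDerivAt (fun u => S u i j) ((-(1/2 : ℝ) • (S s * A s + A s * S s)) i j) s :=
    fun s hs => hderiv s (hdom s hs).1 (hdom s hs).2
  by_cases hd : d = 0
  · subst hd
    constructor <;>
      exact ⟨by ext i j; exact i.elim0, fun x => by simp [dotProduct, Finsupp.sum_fintype]⟩
  -- d ≥ 1
  obtain ⟨e, he⟩ : ∃ e : Fin d → ℝ, e ⬝ᵥ e = 1 := by
    refine ⟨Pi.single ⟨0, Nat.pos_of_ne_zero hd⟩ 1, ?_⟩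
    simp [dotProduct, Pi.single_apply]
  have hT0 : ENNReal.ofReal 0 < T := by simpa using hT
  have hβ0 : 0 ≤ β := by
    have h1 := hAbound 0 le_rfl hT0 e
    rw [he, mul_one] at h1
    exact le_trans (abs_nonneg _) h1
  have hS0pos : ∀ w : Fin d → ℝ, w ⬝ᵥ w = 1 → 0 < w ⬝ᵥ (S 0).mulVec w := by
    intro w hw
    have hw0 : w ≠ 0 := by
      intro h0; rw [h0] at hw; simp at hw
    have := hS0.dotProduct_mulVec_pos hw0
    simpa using this
  have hminq : ∀ w : Fin d → ℝ, w ⬝ᵥ w = 1 → lmin ≤ w ⬝ᵥ (S 0).mulVec w := by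
    intro w hw
    have := hmin.dotProduct_mulVec_nonneg w
    simp only [star_trivial] at this
    rw [quad_sub_smul_one, hw, mul_one] at this
    linarith
  have hmaxq : ∀ w : Fin d → ℝ, w ⬝ᵥ w = 1 → w ⬝ᵥ (S 0).mulVec w ≤ lmax := by
    intro w hw
    have := hmax.dotProduct_mulVec_nonneg w
    simp only [star_trivial] at this
    rw [quad_smul_one_sub, hw, mul_one] at this
    linarith
  have hlmaxpos : 0 < lmax := lt_of_lt_of_le (hS0pos e he) (hmaxq e he)
  have hb : Filter.Tendsto (fun n : ℕ => (1:ℝ)/(n+1)) Filter.atTop (nhds 0) :=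
    tendsto_one_div_add_atTop_nhds_zero_nat
  -- the unit-sphere lower bound
  have hunit_lower : ∀ w : Fin d → ℝ, w ⬝ᵥ w = 1 →
      Real.exp (-β * t) * lmin ≤ w ⬝ᵥ (S t).mulVec w := by
    intro w hw
    rcases le_or_gt lmin 0 with hneg | hpos
    · -- wᵀ S t w ≥ 0 suffices
      have h0 : (0:ℝ) ≤ w ⬝ᵥ (S t).mulVec w := by
        have htends : Filter.Tendsto
            (fun n : ℕ => (-(1/(n+1)) : ℝ) * Real.exp ((β + 1/(n+1)) * t))
            Filter.atTop (nhds (-(0:ℝ) * Real.exp ((β + 0) * t))) := by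
          apply Filter.Tendsto.mul hb.neg
          exact (Real.continuous_exp.tendsto _).comp
            ((tendsto_const_nhds.add hb).mul_const t)
        have hlim : Filter.Tendsto
            (fun n : ℕ => (-(1/(n+1)) : ℝ) * Real.exp ((β + 1/(n+1)) * t))
            Filter.atTop (nhds 0) := by simpa using htends
        refine le_of_tendsto hlim ?_
        refine Filter.Eventually.of_forall fun n => ?_
        have hn1 : (0:ℝ) < 1/(n+1) := by positivity
        exact key_lemma β t A S hS' hA' hD' (-(1/(n+1))) (1/(n+1)) (β + 1/(n+1)) hn1
          (by linarith) (by rw [if_neg (by linarith)])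
          (fun w' hw' => lt_trans (by linarith) (hS0pos w' hw'))
          t htIcc w hw
      have : Real.exp (-β * t) * lmin ≤ 0 :=
        mul_nonpos_of_nonneg_of_nonpos (Real.exp_pos _).le hneg
      linarith
    · -- lmin > 0
      have htends : Filter.Tendsto
          (fun n : ℕ => ((lmin - 1/(n+1)) : ℝ) * Real.exp (-(β + 1/(n+1)) * t))
          Filter.atTop (nhds ((lmin - 0) * Real.exp (-(β + 0) * t))) := by
        apply Filter.Tendsto.mul (tendsto_const_nhds.sub hb)
        exact (Real.continuous_exp.tendsto _).comp
          (((tendsto_const_nhds.add hb).neg).mul_const t)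
      have hlim : Filter.Tendsto
          (fun n : ℕ => ((lmin - 1/(n+1)) : ℝ) * Real.exp (-(β + 1/(n+1)) * t))
          Filter.atTop (nhds (lmin * Real.exp (-β * t))) := by
        simpa using htends
      have hle : lmin * Real.exp (-β * t) ≤ w ⬝ᵥ (S t).mulVec w := by
        refine le_of_tendsto hlim ?_
        have hev : ∀ᶠ n : ℕ in Filter.atTop, (1:ℝ)/(n+1) < lmin :=
          hb.eventually (eventually_lt_nhds hpos)
        filter_upwards [hev] with n hn
        have hn1 : (0:ℝ) < 1/(n+1) := by positivity
        exact key_lemma β t A S hS' hA' hD' (lmin - 1/(n+1)) (1/(n+1)) (-(β + 1/(n+1))) hn1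
          (by linarith) (by rw [if_pos (by linarith)])
          (fun w' hw' => lt_of_lt_of_le (by linarith) (hminq w' hw'))
          t htIcc w hw
      linarith [hle, mul_comm lmin (Real.exp (-β * t))]
  -- the unit-sphere upper bound
  have hunit_upper : ∀ w : Fin d → ℝ, w ⬝ᵥ w = 1 →
      w ⬝ᵥ (S t).mulVec w ≤ Real.exp (β * t) * lmax := by
    intro w hw
    have hS'neg : ∀ s ∈ Icc (0:ℝ) t, (fun u => -S u) s |>.IsSymm := by
      intro s hs
      show (-S s)ᵀ = -S s
      rw [Matrix.transpose_neg, hS' s hs]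
    have hD'neg : ∀ s ∈ Icc (0:ℝ) t, ∀ i j,
        HasDerivAt (fun u => (-S u) i j)
          ((-(1/2 : ℝ) • ((-S s) * A s + A s * (-S s))) i j) s := by
      intro s hs i j
      have h := (hD' s hs i j).neg
      have heq : (-(1/2 : ℝ) • ((-S s) * A s + A s * (-S s))) i j
          = -((-(1/2 : ℝ) • (S s * A s + A s * S s)) i j) := by
        simp [Matrix.smul_apply, Matrix.add_apply, Matrix.neg_mul, Matrix.mul_neg,
          Matrix.neg_apply, smul_eq_mul]
        ring
      rw [heq]
      exact h
    have htends : Filter.Tendsto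
        (fun n : ℕ => ((-lmax - 1/(n+1)) : ℝ) * Real.exp ((β + 1/(n+1)) * t))
        Filter.atTop (nhds ((-lmax - 0) * Real.exp ((β + 0) * t))) := by
      apply Filter.Tendsto.mul (tendsto_const_nhds.sub hb)
      exact (Real.continuous_exp.tendsto _).comp
        ((tendsto_const_nhds.add hb).mul_const t)
    have hlim : Filter.Tendsto
        (fun n : ℕ => ((-lmax - 1/(n+1)) : ℝ) * Real.exp ((β + 1/(n+1)) * t))
        Filter.atTop (nhds (-(lmax * Real.exp (β * t)))) := by
      have : ((-lmax - 0) : ℝ) * Real.exp ((β + 0) * t) = -(lmax * Real.exp (β * t)) := by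
        ring_nf
      rw [this] at htends
      simpa using htends
    have hle : -(lmax * Real.exp (β * t)) ≤ -(w ⬝ᵥ (S t).mulVec w) := by
      refine le_of_tendsto hlim ?_
      refine Filter.Eventually.of_forall fun n => ?_
      have hn1 : (0:ℝ) < 1/(n+1) := by positivity
      have hkey := key_lemma β t A (fun u => -S u) hS'neg hA' hD'neg
        (-lmax - 1/(n+1)) (1/(n+1)) (β + 1/(n+1)) hn1
        (by nlinarith) (by rw [if_neg (by nlinarith)])
        (fun w' hw' => by
          have h1 := hmaxq w' hw'
          have h2 : w' ⬝ᵥ (-S 0).mulVec w' = -(w' ⬝ᵥ (S 0).mulVec w') := by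
            rw [Matrix.neg_mulVec, dotProduct_neg]
          rw [h2]; linarith)
        t htIcc w hw
      have h2 : w ⬝ᵥ (-S t).mulVec w = -(w ⬝ᵥ (S t).mulVec w) := by
        rw [Matrix.neg_mulVec, dotProduct_neg]
      rw [h2] at hkey
      exact hkey
    have := neg_le_neg_iff.mp hle
    linarith [this, mul_comm lmax (Real.exp (β * t))]
  constructor
  · apply posSemidef_of_real
    · rw [Matrix.transpose_sub, Matrix.transpose_smul, Matrix.transpose_one, hS' t htIcc]
    · intro x
      have h := unit_to_all (S t - (Real.exp (-β * t) * lmin) • 1) 0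
        (fun w hw => by
          rw [quad_sub_smul_one, hw, mul_one]
          linarith [hunit_lower w hw]) x
      simpa using h
  · apply posSemidef_of_real
    · rw [Matrix.transpose_sub, Matrix.transpose_smul, Matrix.transpose_one, hS' t htIcc]
    · intro x
      have h := unit_to_all ((Real.exp (β * t) * lmax) • 1 - S t) 0
        (fun w hw => by
          rw [quad_smul_one_sub, hw, mul_one]
          linarith [hunit_upper w hw]) x
      simpa using h
end

section
/- Let G : ℝ^{d×d} → ℝ^{d×d} be continuous with G(Σ) symmetric for every Σ, and let Σ : [0,∞) → ℝ^{d×d} be a continuous bounded function taking positive semidefinite symmetric values, such that the nonnegative function t ↦ Tr(G(Σ(t)) Σ(t) G(Σ(t))) is integrable on [0,∞). Then there exist times tᵢ → ∞ and a positive semidefinite symmetric matrix Σ₀ such that Σ(tᵢ) → Σ₀, G(Σ₀) Σ₀ = Σ₀ G(Σ₀) = 0, and consequently Tr(G(Σ₀)(M Σ₀ + Σ₀ Mᵀ)) = 0 for every M ∈ ℝ^{d×d}. -/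
open Matrix Set Filter MeasureTheory

lemma aux_trace_tmul_nonneg {d : ℕ} (A : Matrix (Fin d) (Fin d) ℝ) :
    0 ≤ (Aᵀ * A).trace := by
  have : (Aᵀ * A).trace = ∑ j, ∑ k, (A k j) * (A k j) := by
    simp [Matrix.trace, Matrix.mul_apply, Matrix.diag]
  rw [this]
  exact Finset.sum_nonneg fun j _ => Finset.sum_nonneg fun k _ => mul_self_nonneg _

lemma aux_trace_tmul_eq_zero {d : ℕ} (A : Matrix (Fin d) (Fin d) ℝ)
    (h : (Aᵀ * A).trace = 0) : A = 0 := by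
  have h2 : (Aᵀ * A).trace = ∑ j, ∑ k, (A k j) * (A k j) := by
    simp [Matrix.trace, Matrix.mul_apply, Matrix.diag]
  rw [h2] at h
  ext i j
  have h3 := (Finset.sum_eq_zero_iff_of_nonneg (fun j _ => Finset.sum_nonneg
    (fun k _ => mul_self_nonneg (A k j)))).mp h j (Finset.mem_univ j)
  have h4 := (Finset.sum_eq_zero_iff_of_nonneg (fun k _ => mul_self_nonneg (A k j))).mp h3 i
    (Finset.mem_univ i)
  simpa [mul_self_eq_zero] using h4

lemma aux_conjT_eq_transpose {d : ℕ} (A : Matrix (Fin d) (Fin d) ℝ) : Aᴴ = Aᵀ := by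
  ext i j; simp [Matrix.conjTranspose_apply]

lemma aux_exists_small (f : ℝ → ℝ) (hint : IntegrableOn f (Ici 0)) (n : ℕ) :
    ∃ t : ℝ, (n:ℝ) ≤ t ∧ f t < 1/(n+1) := by
  by_contra h
  push_neg at h
  have hI : IntegrableOn f (Ici (n:ℝ)) := hint.mono_set (Ici_subset_Ici.mpr (Nat.cast_nonneg n))
  have hfin := hI.2
  rw [MeasureTheory.hasFiniteIntegral_def] at hfin
  have hmono : ∫⁻ _t in Ici (n:ℝ), ENNReal.ofReal (1/(n+1)) ∂volume ≤
      ∫⁻ t in Ici (n:ℝ), ‖f t‖₊ ∂volume := by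
    apply lintegral_mono_ae
    refine (ae_restrict_iff' measurableSet_Ici).2 (ae_of_all _ fun t ht => ?_)
    calc ENNReal.ofReal (1/(n+1)) ≤ ENNReal.ofReal (f t) := ENNReal.ofReal_le_ofReal (h t ht)
      _ ≤ ‖f t‖₊ := Real.ofReal_le_enorm _
  rw [MeasureTheory.setLIntegral_const, Real.volume_Ici, ENNReal.mul_top] at hmono
  · exact absurd (lt_of_le_of_lt hmono hfin) (by simp)
  · have hc : (0:ℝ) < 1/(n+1) := by positivity
    simpa [ENNReal.ofReal_eq_zero, not_le] using hc

section
open scoped MatrixOrder Matrix.Norms.L2Operator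

lemma aux_sqrt {d : ℕ} (A : Matrix (Fin d) (Fin d) ℝ) (hA : A.PosSemidef) :
    ∃ R : Matrix (Fin d) (Fin d) ℝ, R * R = A ∧ Rᵀ = R :=
  ⟨CFC.sqrt A, CFC.sqrt_mul_sqrt_self A hA.nonneg, by
    rw [← aux_conjT_eq_transpose]; exact (CFC.sqrt_nonneg A).posSemidef.1⟩

end

/-- Subsequential convergence to stationary points: if `Σ : [0,∞) → Sym²` is continuous,
bounded, positive semidefinite valued, and `t ↦ Tr(G(Σ(t)) Σ(t) G(Σ(t)))` is integrable on
`[0,∞)`, then along some times `tᵢ → ∞` the flow converges to a positive semidefinite `Σ₀`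
with `G(Σ₀)Σ₀ = Σ₀G(Σ₀) = 0`, hence `Tr(G(Σ₀)(MΣ₀ + Σ₀Mᵀ)) = 0` for all `M`. -/
theorem subsequential_convergence_to_stationary_point {d : ℕ}
    (G : Matrix (Fin d) (Fin d) ℝ → Matrix (Fin d) (Fin d) ℝ)
    (hGcont : Continuous G) (hGsymm : ∀ S, (G S).IsSymm)
    (S : ℝ → Matrix (Fin d) (Fin d) ℝ)
    (hScont : ContinuousOn S (Ici 0))
    (hbdd : ∃ C : ℝ, ∀ t : ℝ, 0 ≤ t → ∀ i j, |S t i j| ≤ C)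
    (hpsd : ∀ t : ℝ, 0 ≤ t → (S t).PosSemidef)
    (hint : IntegrableOn (fun t => (G (S t) * S t * G (S t)).trace) (Ici 0)) :
    ∃ (ts : ℕ → ℝ) (S₀ : Matrix (Fin d) (Fin d) ℝ),
      Tendsto ts atTop atTop ∧
      Tendsto (fun n => S (ts n)) atTop (nhds S₀) ∧
      S₀.PosSemidef ∧ G S₀ * S₀ = 0 ∧ S₀ * G S₀ = 0 ∧
      ∀ M : Matrix (Fin d) (Fin d) ℝ, (G S₀ * (M * S₀ + S₀ * Mᵀ)).trace = 0 := by
  obtain ⟨C, hC⟩ := hbdd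
  set f : ℝ → ℝ := fun t => (G (S t) * S t * G (S t)).trace with hf
  have key : ∀ n : ℕ, ∃ t : ℝ, (n:ℝ) ≤ t ∧ f t < 1/(n+1) := aux_exists_small f hint
  choose t0 ht0ge ht0lt using key
  have ht0nonneg : ∀ n, (0:ℝ) ≤ t0 n := fun n => le_trans (Nat.cast_nonneg n) (ht0ge n)
  have ht0tend : Tendsto t0 atTop atTop :=
    tendsto_atTop_mono ht0ge tendsto_natCast_atTop_atTop
  -- compactness
  set K : Set (Matrix (Fin d) (Fin d) ℝ) :=
    Set.univ.pi (fun _ : Fin d => Set.univ.pi fun _ : Fin d => Icc (-C) C) with hK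
  have hKcomp : IsCompact K :=
    isCompact_univ_pi fun _ => isCompact_univ_pi fun _ => isCompact_Icc
  have hmem : ∀ n, S (t0 n) ∈ K := by
    intro n
    intro i _
    intro j _
    exact abs_le.mp (hC (t0 n) (ht0nonneg n) i j)
  haveI : FirstCountableTopology (Matrix (Fin d) (Fin d) ℝ) :=
    inferInstanceAs (FirstCountableTopology (Fin d → Fin d → ℝ))
  obtain ⟨S₀, _hS₀K, φ, hφmono, hφtend⟩ := hKcomp.tendsto_subseq hmem
  refine ⟨t0 ∘ φ, S₀, ht0tend.comp hφmono.tendsto_atTop, hφtend, ?_⟩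
  have hherm : S₀.IsHermitian := by
    have hcontT : Continuous fun A : Matrix (Fin d) (Fin d) ℝ => Aᴴ :=
      Continuous.matrix_conjTranspose continuous_id
    have h1 : Tendsto (fun n => (S (t0 (φ n)))ᴴ) atTop (nhds S₀ᴴ) :=
      (hcontT.tendsto S₀).comp hφtend
    have h2 : (fun n => (S (t0 (φ n)))ᴴ) = fun n => S (t0 (φ n)) := by
      funext n; exact (hpsd _ (ht0nonneg _)).1
    rw [h2] at h1
    exact tendsto_nhds_unique h1 hφtend
  have hS₀psd : S₀.PosSemidef := by
    refine Matrix.PosSemidef.of_dotProduct_mulVec_nonneg hherm fun x => ?_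
    have hcontq : Continuous fun A : Matrix (Fin d) (Fin d) ℝ =>
        dotProduct (star x) (A *ᵥ x) :=
      Continuous.dotProduct continuous_const
        (Continuous.matrix_mulVec continuous_id continuous_const)
    refine ge_of_tendsto ((hcontq.tendsto S₀).comp hφtend) (Eventually.of_forall fun n => ?_)
    exact (hpsd _ (ht0nonneg _)).dotProduct_mulVec_nonneg x
  -- trace limit
  have hΦcont : Continuous fun A : Matrix (Fin d) (Fin d) ℝ => (G A * A * G A).trace :=
    Continuous.matrix_trace ((Continuous.matrix_mul (Continuous.matrix_mul hGcont continuous_id)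
      hGcont))
  have htend1 : Tendsto (fun n => f (t0 (φ n))) atTop (nhds ((G S₀ * S₀ * G S₀).trace)) :=
    (hΦcont.tendsto S₀).comp hφtend
  have htend0 : Tendsto (fun n : ℕ => 1/((φ n : ℝ)+1)) atTop (nhds 0) := by
    apply squeeze_zero (fun n => by positivity) (fun n => ?_)
      tendsto_one_div_add_atTop_nhds_zero_nat
    have hn : n ≤ φ n := hφmono.le_apply
    have hn' : (n:ℝ) ≤ (φ n : ℝ) := by exact_mod_cast hn
    apply one_div_le_one_div_of_le (by positivity) (by linarith)
  have hle0 : (G S₀ * S₀ * G S₀).trace ≤ 0 :=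
    le_of_tendsto_of_tendsto' htend1 htend0 fun n => (ht0lt (φ n)).le
  -- algebra
  set B := G S₀ with hB
  have hBsymm : Bᵀ = B := hGsymm S₀
  obtain ⟨R, hRR, hRsymm⟩ := aux_sqrt S₀ hS₀psd
  have hkey : (R * B)ᵀ * (R * B) = B * S₀ * B := by
    rw [Matrix.transpose_mul, hBsymm, hRsymm, ← hRR]
    simp only [Matrix.mul_assoc]
  have htr0 : ((R * B)ᵀ * (R * B)).trace = 0 := by
    rw [hkey, Matrix.mul_assoc]
    refine le_antisymm ?_ ?_
    · rw [← Matrix.mul_assoc]; exact hle0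
    · have := aux_trace_tmul_nonneg (R * B)
      rw [hkey, Matrix.mul_assoc] at this; exact this
  have hRB : R * B = 0 := aux_trace_tmul_eq_zero _ htr0
  have hSB : S₀ * B = 0 := by rw [← hRR, Matrix.mul_assoc, hRB, Matrix.mul_zero]
  have hS₀symm : S₀ᵀ = S₀ := by rw [← aux_conjT_eq_transpose]; exact hherm
  have hBS : B * S₀ = 0 := by
    have h := congrArg Matrix.transpose hSB
    rwa [Matrix.transpose_mul, hBsymm, hS₀symm, Matrix.transpose_zero] at h
  refine ⟨hS₀psd, hBS, hSB, fun M => ?_⟩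
  have h1 : (B * (M * S₀)).trace = 0 := by
    rw [← Matrix.mul_assoc, Matrix.trace_mul_cycle, hSB, Matrix.zero_mul, Matrix.trace_zero]
  have h2 : (B * (S₀ * Mᵀ)).trace = 0 := by
    rw [← Matrix.mul_assoc, hBS, Matrix.zero_mul, Matrix.trace_zero]
  rw [Matrix.mul_add, Matrix.trace_add, h1, h2, add_zero]
end

section
/- Let k : ℝ^d → (0,∞) be measurable with ∫ k(ω) dω = 1, let g ∈ L¹(ℝ^d; ℂ) with N(g) := ∫ |g(ω)|²/k(ω) dω < ∞, and set f_g(x) = ∫ g(ω) e^{2πi⟨x,ω⟩} dω. Let α > 0, s > 0, U₁₁ ∈ ℝ, and define (H_s f_g)(x) = ∫_ℝ f_g(x + U₁₁ y e₁) dν(y), with ν the Gaussian measure N(0, α² s) on ℝ and e₁ the first standard basis vector. Then H_s f_g = f_{g_s}, where g_s(ω) = exp(−2π² α² U₁₁² ω₁² s) · g(ω), and N(g_s) = ∫ exp(−4π² α² U₁₁² ω₁² s) |g(ω)|²/k(ω) dω ≤ N(g). -/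
open MeasureTheory ProbabilityTheory Matrix Real

/-- The first standard basis vector of `ℝ^d`. -/
noncomputable def stdBasisOne (d : ℕ) [NeZero d] : Fin d → ℝ :=
  Pi.single (0 : Fin d) (1 : ℝ)

lemma gauss_char {v : ℝ} (hv : 0 < v) (t : ℝ) :
    ∫ y, Complex.exp ((2 * π * Complex.I) * ((t * y : ℝ) : ℂ))
      ∂(gaussianReal 0 ⟨v, hv.le⟩) = (Real.exp (-(2 * π ^ 2 * v * t ^ 2)) : ℂ) := by
  have hv0 : (⟨v, hv.le⟩ : NNReal) ≠ 0 := by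
    simp [← NNReal.coe_ne_zero, hv.ne']
  rw [gaussianReal_of_var_ne_zero _ hv0]
  have hpdf : gaussianPDF 0 ⟨v, hv.le⟩
      = fun y => ((gaussianPDFReal 0 ⟨v, hv.le⟩ y).toNNReal : ENNReal) := by
    funext y; simp [gaussianPDF, ENNReal.ofReal]
  rw [hpdf, integral_withDensity_eq_integral_smul
    (measurable_gaussianPDFReal 0 ⟨v, hv.le⟩).real_toNNReal]
  have h2v : (0:ℝ) < 2 * π * v := by positivity
  have hsq : Real.sqrt (2 * π * v) ≠ 0 := by positivity
  have hpt : ∀ y : ℝ, (gaussianPDFReal 0 ⟨v, hv.le⟩ y).toNNReal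
        • Complex.exp ((2 * π * Complex.I) * ((t * y : ℝ) : ℂ))
      = ((Real.sqrt (2 * π * v) : ℂ))⁻¹
        * Complex.exp ((-(1/(2*v)) : ℂ) * y^2 + ((2 * π * t) * Complex.I) * y + 0) := by
    intro y
    have hnn : 0 ≤ gaussianPDFReal 0 ⟨v, hv.le⟩ y := gaussianPDFReal_nonneg _ _ _
    rw [NNReal.smul_def, Real.coe_toNNReal _ hnn]
    unfold gaussianPDFReal; rw [Complex.real_smul]
    change (((√(2 * π * v))⁻¹ * rexp (-(y - 0) ^ 2 / (2 * v)) : ℝ) : ℂ) * _ = _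
    have hvC : (v:ℂ) ≠ 0 := by exact_mod_cast hv.ne'
    rw [Complex.ofReal_mul, Complex.ofReal_inv, Complex.ofReal_exp, mul_assoc,
      ← Complex.exp_add]
    congr 1
    push_cast
    field_simp
    ring
  simp_rw [hpt]
  rw [integral_const_mul, integral_cexp_quadratic (by simp; positivity) _ _]
  have hb : (π : ℂ) / -(-(1/(2*v)) : ℂ) = ((2 * π * v : ℝ) : ℂ) := by
    push_cast
    rw [neg_neg]
    have hvC : (v:ℂ) ≠ 0 := by exact_mod_cast hv.ne'
    field_simp
  rw [hb]
  rw [show ((1:ℂ)/2) = ((1/2 : ℝ) : ℂ) by norm_num,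
    ← Complex.ofReal_cpow h2v.le, ← Real.sqrt_eq_rpow]
  have hvC : (v:ℂ) ≠ 0 := by exact_mod_cast hv.ne'
  rw [← mul_assoc, inv_mul_cancel₀ (Complex.ofReal_ne_zero.mpr hsq), one_mul,
    Complex.ofReal_exp]
  congr 1
  rw [mul_pow, Complex.I_sq]
  push_cast
  field_simp
  ring

/-- Norm contraction of the Gaussian smoothing operator on the RKHS: with
`f_g(x) = ∫ g(ω)e^{2πi⟨x,ω⟩}dω` and `(H_s f)(x) = ∫ f(x + U₁₁ y e₁) dN(0,α²s)(y)`, one has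
`H_s f_g = f_{g_s}` for `g_s(ω) = e^{−2π²α²U₁₁²ω₁²s} g(ω)`, and
`N(g_s) = ∫ e^{−4π²α²U₁₁²ω₁²s}|g|²/k dω ≤ N(g)`. -/
theorem gaussian_smoothing_contracts_rkhs_norm {d : ℕ} [NeZero d]
    (k : (Fin d → ℝ) → ℝ) (hk : Measurable k) (hkpos : ∀ ω, 0 < k ω)
    (hkint : Integrable k) (hk1 : (∫ ω, k ω) = 1)
    (g : (Fin d → ℝ) → ℂ) (hgmeas : Measurable g) (hg : Integrable g)
    (hN : Integrable fun ω => ‖g ω‖ ^ 2 / k ω)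
    (α s U₁₁ : ℝ) (hα : 0 < α) (hs : 0 < s) :
    (∀ x : Fin d → ℝ,
      (∫ y, (∫ ω : Fin d → ℝ, g ω * Complex.exp ((2 * π * Complex.I)
            * (((x + (U₁₁ * y) • stdBasisOne d) ⬝ᵥ ω : ℝ) : ℂ)))
        ∂(gaussianReal 0 ⟨α ^ 2 * s, mul_nonneg (sq_nonneg α) hs.le⟩))
      = ∫ ω : Fin d → ℝ,
          ((Real.exp (-(2 * π ^ 2 * α ^ 2 * U₁₁ ^ 2 * (ω 0) ^ 2 * s)) : ℂ) * g ω)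
            * Complex.exp ((2 * π * Complex.I) * ((x ⬝ᵥ ω : ℝ) : ℂ))) ∧
    (∫ ω : Fin d → ℝ,
        ‖(Real.exp (-(2 * π ^ 2 * α ^ 2 * U₁₁ ^ 2 * (ω 0) ^ 2 * s)) : ℂ) * g ω‖ ^ 2 / k ω)
      = (∫ ω : Fin d → ℝ,
          Real.exp (-(4 * π ^ 2 * α ^ 2 * U₁₁ ^ 2 * (ω 0) ^ 2 * s)) * (‖g ω‖ ^ 2 / k ω)) ∧
    (∫ ω : Fin d → ℝ,
        Real.exp (-(4 * π ^ 2 * α ^ 2 * U₁₁ ^ 2 * (ω 0) ^ 2 * s)) * (‖g ω‖ ^ 2 / k ω))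
      ≤ ∫ ω : Fin d → ℝ, ‖g ω‖ ^ 2 / k ω := by
  have hv : (0:ℝ) < α ^ 2 * s := by positivity
  refine ⟨?_, ?_, ?_⟩
  · -- Part 1
    intro x
    set ν : Measure ℝ := gaussianReal 0 ⟨α ^ 2 * s, mul_nonneg (sq_nonneg α) hs.le⟩ with hν
    have : IsProbabilityMeasure ν := by rw [hν]; exact instIsProbabilityMeasureGaussianReal _ _
    -- pointwise splitting of the exponential
    have hsplit : ∀ (y : ℝ) (ω : Fin d → ℝ),
        g ω * Complex.exp ((2 * π * Complex.I)
            * (((x + (U₁₁ * y) • stdBasisOne d) ⬝ᵥ ω : ℝ) : ℂ))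
        = (g ω * Complex.exp ((2 * π * Complex.I) * ((x ⬝ᵥ ω : ℝ) : ℂ)))
          * Complex.exp ((2 * π * Complex.I) * (((U₁₁ * ω 0) * y : ℝ) : ℂ)) := by
      intro y ω
      have hd : ((x + (U₁₁ * y) • stdBasisOne d) ⬝ᵥ ω : ℝ)
          = x ⬝ᵥ ω + (U₁₁ * ω 0) * y := by
        rw [add_dotProduct, smul_dotProduct, stdBasisOne, single_dotProduct, one_mul,
          smul_eq_mul]
        ring
      rw [hd, Complex.ofReal_add, mul_add, Complex.exp_add]
      exact (mul_assoc _ _ _).symm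
    simp_rw [hsplit]
    -- measurability
    have hdot : Measurable fun ω : Fin d → ℝ => x ⬝ᵥ ω := by
      unfold dotProduct
      exact Finset.measurable_sum _ fun i _ => (measurable_pi_apply i).const_mul _
    have hA : Measurable fun ω : Fin d → ℝ =>
        g ω * Complex.exp ((2 * π * Complex.I) * ((x ⬝ᵥ ω : ℝ) : ℂ)) :=
      hgmeas.mul (Complex.measurable_exp.comp
        ((Complex.measurable_ofReal.comp hdot).const_mul _))
    have hAint : Integrable (fun ω : Fin d → ℝ =>
        g ω * Complex.exp ((2 * π * Complex.I) * ((x ⬝ᵥ ω : ℝ) : ℂ))) := by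
      refine hg.mono hA.aestronglyMeasurable (Filter.Eventually.of_forall fun ω => ?_)
      rw [norm_mul]
      simp [Complex.norm_exp, Complex.mul_re, Complex.mul_im]
    have hFmeas : AEStronglyMeasurable
        (Function.uncurry fun (y : ℝ) (ω : Fin d → ℝ) =>
          (g ω * Complex.exp ((2 * π * Complex.I) * ((x ⬝ᵥ ω : ℝ) : ℂ)))
          * Complex.exp ((2 * π * Complex.I) * (((U₁₁ * ω 0) * y : ℝ) : ℂ)))
        (ν.prod volume) := by
      apply Measurable.aestronglyMeasurable
      apply ((hA.comp measurable_snd).mul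
        (Complex.measurable_exp.comp ((Complex.measurable_ofReal.comp ?_).const_mul _)))
      have hω0 : Measurable fun ω : Fin d → ℝ => ω 0 := measurable_pi_apply 0
      exact ((hω0.comp measurable_snd).const_mul U₁₁).mul measurable_fst
    have hFint : Integrable
        (Function.uncurry fun (y : ℝ) (ω : Fin d → ℝ) =>
          (g ω * Complex.exp ((2 * π * Complex.I) * ((x ⬝ᵥ ω : ℝ) : ℂ)))
          * Complex.exp ((2 * π * Complex.I) * (((U₁₁ * ω 0) * y : ℝ) : ℂ)))
        (ν.prod volume) := by
      rw [integrable_prod_iff hFmeas]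
      constructor
      · refine Filter.Eventually.of_forall fun y => ?_
        refine hAint.mono ?_ (Filter.Eventually.of_forall fun ω => ?_)
        · exact (hA.mul (Complex.measurable_exp.comp
            ((Complex.measurable_ofReal.comp
              (((measurable_pi_apply (X := fun _ : Fin d => ℝ) (0 : Fin d)).const_mul U₁₁).mul_const y)).const_mul
                _))).aestronglyMeasurable
        · rw [norm_mul]
          simp [Complex.norm_exp, Complex.mul_re, Complex.mul_im]
      · have hnorm : ∀ y : ℝ, (∫ ω : Fin d → ℝ,
            ‖(g ω * Complex.exp ((2 * π * Complex.I) * ((x ⬝ᵥ ω : ℝ) : ℂ)))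
              * Complex.exp ((2 * π * Complex.I) * (((U₁₁ * ω 0) * y : ℝ) : ℂ))‖)
            = ∫ ω : Fin d → ℝ, ‖g ω‖ := by
          intro y
          congr 1
          funext ω
          simp [Complex.norm_exp, Complex.mul_re, Complex.mul_im]
        simp_rw [Function.uncurry, hnorm]
        exact integrable_const _
    rw [integral_integral_swap hFint]
    have hinner : ∀ ω : Fin d → ℝ,
        (∫ y, (g ω * Complex.exp ((2 * π * Complex.I) * ((x ⬝ᵥ ω : ℝ) : ℂ)))
            * Complex.exp ((2 * π * Complex.I) * (((U₁₁ * ω 0) * y : ℝ) : ℂ)) ∂ν)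
        = ((Real.exp (-(2 * π ^ 2 * α ^ 2 * U₁₁ ^ 2 * (ω 0) ^ 2 * s)) : ℂ) * g ω)
            * Complex.exp ((2 * π * Complex.I) * ((x ⬝ᵥ ω : ℝ) : ℂ)) := by
      intro ω
      rw [integral_const_mul, hν, gauss_char hv (U₁₁ * ω 0)]
      rw [show -(2 * π ^ 2 * (α ^ 2 * s) * (U₁₁ * ω 0) ^ 2)
          = -(2 * π ^ 2 * α ^ 2 * U₁₁ ^ 2 * (ω 0) ^ 2 * s) by ring]
      ring
    simp_rw [hinner]
  · -- Part 2
    congr 1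
    funext ω
    have hpos := Real.exp_pos (-(2 * π ^ 2 * α ^ 2 * U₁₁ ^ 2 * (ω 0) ^ 2 * s))
    rw [norm_mul, Complex.norm_real, Real.norm_eq_abs, abs_of_pos hpos, mul_pow,
      ← Real.exp_nat_mul, mul_div_assoc]
    congr 2
    push_cast
    ring
  · -- Part 3
    have hmeas : Measurable fun ω : Fin d → ℝ =>
        Real.exp (-(4 * π ^ 2 * α ^ 2 * U₁₁ ^ 2 * (ω 0) ^ 2 * s)) * (‖g ω‖ ^ 2 / k ω) := by
      have hω0 : Measurable fun ω : Fin d → ℝ => ω 0 := measurable_pi_apply 0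
      refine (Real.measurable_exp.comp ?_).mul ((hgmeas.norm.pow_const 2).div hk)
      exact ((((hω0.pow_const 2).const_mul
        (4 * π ^ 2 * α ^ 2 * U₁₁ ^ 2)).mul_const s).neg)
    have hle : ∀ ω : Fin d → ℝ,
        Real.exp (-(4 * π ^ 2 * α ^ 2 * U₁₁ ^ 2 * (ω 0) ^ 2 * s)) * (‖g ω‖ ^ 2 / k ω)
          ≤ ‖g ω‖ ^ 2 / k ω := by
      intro ω
      have h0 : (0:ℝ) ≤ ‖g ω‖ ^ 2 / k ω := div_nonneg (sq_nonneg _) (hkpos ω).le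
      have h1 : Real.exp (-(4 * π ^ 2 * α ^ 2 * U₁₁ ^ 2 * (ω 0) ^ 2 * s)) ≤ 1 :=
        Real.exp_le_one_iff.mpr (neg_nonpos.mpr (by positivity))
      calc _ ≤ 1 * (‖g ω‖ ^ 2 / k ω) := mul_le_mul_of_nonneg_right h1 h0
        _ = _ := one_mul _
    have hint : Integrable fun ω : Fin d → ℝ =>
        Real.exp (-(4 * π ^ 2 * α ^ 2 * U₁₁ ^ 2 * (ω 0) ^ 2 * s)) * (‖g ω‖ ^ 2 / k ω) := by
      refine hN.mono hmeas.aestronglyMeasurable (Filter.Eventually.of_forall fun ω => ?_)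
      have h0 : (0:ℝ) ≤ ‖g ω‖ ^ 2 / k ω := div_nonneg (sq_nonneg _) (hkpos ω).le
      rw [Real.norm_eq_abs, Real.norm_eq_abs, abs_of_nonneg h0,
        abs_of_nonneg (mul_nonneg (Real.exp_pos _).le h0)]
      exact hle ω
    exact integral_mono hint hN hle
end
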